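/- arXiv:0809.3575 — 13 statements merged into one kernel-verified Lean document; each statement's English description precedes it below -/
import Mathlib

section
/- Let 𝒜 be an abelian category, let a : A₁ → A₀, b : B₁ → B₀ and b' : B'₁ → B'₀ be objects of the arrow 2-category 𝒜^[1] with A₀ projective, and let w : b → b' be a morphism in 𝒜^[1] such that the induced morphisms ker b → ker b' and coker b → coker b' are isomorphisms. Then post-composition with w induces a bijection from the set of homotopy classes of morphisms a → b to the set of homotopy classes of morphisms a → b', and for every morphism (f₀,f₁) : a → b, composition with w₁ : B₁ → B'₁ gives a bijection from the set of self-homotopies of (f₀,f₁) to the set of self-homotopies of w ∘ (f₀,f₁). -/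
open CategoryTheory CategoryTheory.Limits

universe v u

/-- A morphism in the arrow (2-)category `𝒜^[1]` from `a : A₁ ⟶ A₀` to `b : B₁ ⟶ B₀`:
a pair `(f₀, f₁)` with `f₀ ∘ a = b ∘ f₁`. -/
structure ArrowMor {C : Type u} [Category.{v} C] {A₁ A₀ B₁ B₀ : C}
    (a : A₁ ⟶ A₀) (b : B₁ ⟶ B₀) where
  f₀ : A₀ ⟶ B₀
  f₁ : A₁ ⟶ B₁
  comm : a ≫ f₀ = f₁ ≫ b

namespace ArrowMor

variable {C : Type u} [Category.{v} C] {A₁ A₀ B₁ B₀ D₁ D₀ : C}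
  {a : A₁ ⟶ A₀} {b : B₁ ⟶ B₀} {d : D₁ ⟶ D₀}

theorem ext' {f g : ArrowMor a b} (h0 : f.f₀ = g.f₀) (h1 : f.f₁ = g.f₁) : f = g := by
  cases f; cases g; simp_all

/-- The identity morphism of an arrow. -/
def id (a : A₁ ⟶ A₀) : ArrowMor a a := ⟨𝟙 _, 𝟙 _, by simp⟩

/-- (Diagrammatic order) composition of morphisms of arrows. -/
def comp (f : ArrowMor a b) (g : ArrowMor b d) : ArrowMor a d :=
  ⟨f.f₀ ≫ g.f₀, f.f₁ ≫ g.f₁, by rw [← Category.assoc, f.comm, Category.assoc, g.comm,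
    Category.assoc]⟩

end ArrowMor

section Htpy

variable {C : Type u} [Category.{v} C] [Preadditive C] {A₁ A₀ B₁ B₀ : C}
  {a : A₁ ⟶ A₀} {b : B₁ ⟶ B₀}

/-- `α : A₀ ⟶ B₁` is a homotopy from `(f₀,f₁)` to `(g₀,g₁)` if `f₁ - g₁ = α ∘ a`
and `f₀ - g₀ = b ∘ α`. -/
def IsHomotopy (f g : ArrowMor a b) (α : A₀ ⟶ B₁) : Prop :=
  f.f₁ - g.f₁ = a ≫ α ∧ f.f₀ - g.f₀ = α ≫ b

/-- Two morphisms of arrows are homotopic if there is a homotopy between them. -/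
def Homotopic (a : A₁ ⟶ A₀) (b : B₁ ⟶ B₀) (f g : ArrowMor a b) : Prop :=
  ∃ α : A₀ ⟶ B₁, IsHomotopy f g α

theorem Homotopic.refl (f : ArrowMor a b) : Homotopic a b f f :=
  ⟨0, by simp [IsHomotopy]⟩

theorem Homotopic.symm {f g : ArrowMor a b} (h : Homotopic a b f g) : Homotopic a b g f := by
  obtain ⟨α, h₁, h₀⟩ := h
  refine ⟨-α, ?_, ?_⟩
  · rw [Preadditive.comp_neg, ← h₁, neg_sub]
  · rw [Preadditive.neg_comp, ← h₀, neg_sub]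

theorem Homotopic.trans {f g h : ArrowMor a b} (h₁ : Homotopic a b f g)
    (h₂ : Homotopic a b g h) : Homotopic a b f h := by
  obtain ⟨α, hα₁, hα₀⟩ := h₁
  obtain ⟨β, hβ₁, hβ₀⟩ := h₂
  refine ⟨α + β, ?_, ?_⟩
  · rw [Preadditive.comp_add, ← hα₁, ← hβ₁]; abel
  · rw [Preadditive.add_comp, ← hα₀, ← hβ₀]; abel

/-- Homotopy of morphisms of arrows is an equivalence relation. -/
def homSetoid (a : A₁ ⟶ A₀) (b : B₁ ⟶ B₀) : Setoid (ArrowMor a b) :=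
  ⟨Homotopic a b, ⟨Homotopic.refl, Homotopic.symm, Homotopic.trans⟩⟩

theorem Homotopic.comp_right {D₁ D₀ : C} {d : D₁ ⟶ D₀} {f g : ArrowMor a b}
    (h : Homotopic a b f g) (w : ArrowMor b d) :
    Homotopic a d (f.comp w) (g.comp w) := by
  obtain ⟨α, h₁, h₀⟩ := h
  refine ⟨α ≫ w.f₁, ?_, ?_⟩
  · rw [ArrowMor.comp, ArrowMor.comp, ← Preadditive.sub_comp, h₁, Category.assoc]
  · rw [ArrowMor.comp, ArrowMor.comp, ← Preadditive.sub_comp, h₀, Category.assoc,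
      Category.assoc, w.comm]

theorem Homotopic.comp_left {D₁ D₀ : C} {d : D₁ ⟶ D₀} {f g : ArrowMor b d}
    (h : Homotopic b d f g) (w : ArrowMor a b) :
    Homotopic a d (w.comp f) (w.comp g) := by
  obtain ⟨α, h₁, h₀⟩ := h
  refine ⟨w.f₀ ≫ α, ?_, ?_⟩
  · rw [ArrowMor.comp, ArrowMor.comp, ← Preadditive.comp_sub, h₁, ← Category.assoc,
      ← Category.assoc, w.comm]
  · rw [ArrowMor.comp, ArrowMor.comp, ← Preadditive.comp_sub, h₀, Category.assoc]

end Htpy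

section KerCoker

variable {C : Type u} [Category.{v} C] [Abelian C] {A₁ A₀ B₁ B₀ : C}
  {a : A₁ ⟶ A₀} {b : B₁ ⟶ B₀}

/-- The induced morphism `ker a ⟶ ker b`. -/
noncomputable abbrev ArrowMor.kerMap (f : ArrowMor a b) : kernel a ⟶ kernel b :=
  kernel.map a b f.f₁ f.f₀ f.comm

/-- The induced morphism `coker a ⟶ coker b`. -/
noncomputable abbrev ArrowMor.cokerMap (f : ArrowMor a b) : cokernel a ⟶ cokernel b :=
  cokernel.map a b f.f₁ f.f₀ f.comm

end KerCoker

variable {C : Type u} [Category.{v} C] [Abelian C]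


section Aux

variable {A₁ A₀ B₁ B₀ B'₁ B'₀ : C}

/-- If `X` is projective and `x ≫ cokernel.π b = 0`, then `x` lifts through `b`. -/
lemma exists_lift_of_comp_cokernelπ_eq_zero {X P Q : C} [Projective X] (b : P ⟶ Q)
    (x : X ⟶ Q) (hx : x ≫ cokernel.π b = 0) : ∃ y : X ⟶ P, y ≫ b = x := by
  obtain ⟨y, hy⟩ : ∃ y : X ⟶ P,
      y ≫ Abelian.factorThruImage b = kernel.lift (cokernel.π b) x hx :=
    ⟨Projective.factorThru _ _, Projective.factorThru_comp _ _⟩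
  refine ⟨y, ?_⟩
  calc y ≫ b = y ≫ Abelian.factorThruImage b ≫ Abelian.image.ι b := by
        rw [Abelian.image.fac]
    _ = kernel.lift (cokernel.π b) x hx ≫ Abelian.image.ι b := by rw [← Category.assoc, hy]
    _ = x := kernel.lift_ι _ _ _

lemma homotopic_of_comp {a : A₁ ⟶ A₀} {b : B₁ ⟶ B₀} {b' : B'₁ ⟶ B'₀}
    [Projective A₀] (w : ArrowMor b b') (hker : IsIso w.kerMap) (hcoker : IsIso w.cokerMap)
    (f g : ArrowMor a b) (h : Homotopic a b' (f.comp w) (g.comp w)) : Homotopic a b f g := by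
  haveI := hker; haveI := hcoker
  obtain ⟨α', hα1, hα0⟩ := h
  simp only [ArrowMor.comp] at hα1 hα0
  set d₀ := f.f₀ - g.f₀ with hd₀
  set d₁ := f.f₁ - g.f₁ with hd₁
  have hcomm : d₁ ≫ b = a ≫ d₀ := by
    rw [hd₀, hd₁, Preadditive.sub_comp, Preadditive.comp_sub, ← f.comm, ← g.comm]
  have h1 : d₁ ≫ w.f₁ = a ≫ α' := by rw [hd₁, Preadditive.sub_comp, hα1]
  have h0 : d₀ ≫ w.f₀ = α' ≫ b' := by rw [hd₀, Preadditive.sub_comp, hα0]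
  have hπ : d₀ ≫ cokernel.π b = 0 := by
    apply (cancel_mono w.cokerMap).1
    rw [Category.assoc, cokernel.π_desc, ← Category.assoc, h0, Category.assoc,
      cokernel.condition, comp_zero, zero_comp]
  obtain ⟨α₀, hα₀⟩ := exists_lift_of_comp_cokernelπ_eq_zero b d₀ hπ
  have hκb : (d₁ - a ≫ α₀) ≫ b = 0 := by
    rw [Preadditive.sub_comp, hcomm, Category.assoc, hα₀, sub_self]
  obtain ⟨κ, hκι⟩ := kernel.lift' b (d₁ - a ≫ α₀) hκb
  have hlamb : (α' - α₀ ≫ w.f₁) ≫ b' = 0 := by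
    rw [Preadditive.sub_comp, Category.assoc, ← w.comm, ← Category.assoc, hα₀, h0, sub_self]
  obtain ⟨lam, hlamι⟩ := kernel.lift' b' (α' - α₀ ≫ w.f₁) hlamb
  have hwι : w.kerMap ≫ kernel.ι b' = kernel.ι b ≫ w.f₁ := kernel.lift_ι _ _ _
  have hkl : κ ≫ w.kerMap = a ≫ lam := by
    apply (cancel_mono (kernel.ι b')).1
    rw [Category.assoc, Category.assoc, hwι, hlamι, ← Category.assoc, hκι,
      Preadditive.sub_comp, Preadditive.comp_sub, h1, Category.assoc]
  refine ⟨α₀ + lam ≫ inv w.kerMap ≫ kernel.ι b, ?_, ?_⟩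
  · rw [Preadditive.comp_add]
    have key : a ≫ lam ≫ inv w.kerMap ≫ kernel.ι b = d₁ - a ≫ α₀ := by
      calc a ≫ lam ≫ inv w.kerMap ≫ kernel.ι b
          = (a ≫ lam) ≫ inv w.kerMap ≫ kernel.ι b := by simp only [Category.assoc]
        _ = (κ ≫ w.kerMap) ≫ inv w.kerMap ≫ kernel.ι b := by rw [hkl]
        _ = κ ≫ kernel.ι b := by simp
        _ = d₁ - a ≫ α₀ := hκι
    rw [key, hd₁]; abel
  · rw [Preadditive.add_comp, hα₀, Category.assoc, Category.assoc, kernel.condition,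
      comp_zero, comp_zero, add_zero]

lemma exists_comp_homotopic {a : A₁ ⟶ A₀} {b : B₁ ⟶ B₀} {b' : B'₁ ⟶ B'₀}
    [Projective A₀] (w : ArrowMor b b') (hker : IsIso w.kerMap) (hcoker : IsIso w.cokerMap)
    (g : ArrowMor a b') : ∃ f : ArrowMor a b, Homotopic a b' (f.comp w) g := by
  haveI := hker; haveI := hcoker
  set t := g.f₀ ≫ cokernel.π b' ≫ inv w.cokerMap with ht
  set f₀ := Projective.factorThru t (cokernel.π b) with hf₀def
  have hf₀ : f₀ ≫ cokernel.π b = t := Projective.factorThru_comp _ _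
  have hππ : cokernel.π b ≫ w.cokerMap = w.f₀ ≫ cokernel.π b' := cokernel.π_desc _ _ _
  have hx : (f₀ ≫ w.f₀ - g.f₀) ≫ cokernel.π b' = 0 := by
    rw [Preadditive.sub_comp, Category.assoc, ← hππ, ← Category.assoc, hf₀, ht]
    simp
  obtain ⟨β, hβ⟩ := exists_lift_of_comp_cokernelπ_eq_zero b' (f₀ ≫ w.f₀ - g.f₀) hx
  set h₁ := g.f₁ + a ≫ β with hh₁def
  have hh₁ : h₁ ≫ b' = a ≫ f₀ ≫ w.f₀ := by
    rw [hh₁def, Preadditive.add_comp, ← g.comm, Category.assoc, hβ, Preadditive.comp_sub]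
    abel
  set m : Abelian.image b ⟶ Abelian.image b' :=
    kernel.map (cokernel.π b) (cokernel.π b') w.f₀ w.cokerMap hππ with hmdef
  have hmι : m ≫ Abelian.image.ι b' = Abelian.image.ι b ≫ w.f₀ := kernel.lift_ι _ _ _
  have he : Abelian.factorThruImage b ≫ m = w.f₁ ≫ Abelian.factorThruImage b' := by
    apply (cancel_mono (Abelian.image.ι b')).1
    rw [Category.assoc, hmι, ← Category.assoc, Abelian.image.fac, Category.assoc,
      Abelian.image.fac, w.comm]
  set r : B₁ ⟶ pullback m (Abelian.factorThruImage b') :=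
    pullback.lift (Abelian.factorThruImage b) w.f₁ he with hrdef
  have hrfst : r ≫ pullback.fst m (Abelian.factorThruImage b') = Abelian.factorThruImage b :=
    pullback.lift_fst _ _ _
  have hrsnd : r ≫ pullback.snd m (Abelian.factorThruImage b') = w.f₁ :=
    pullback.lift_snd _ _ _
  have hιe : kernel.ι b ≫ Abelian.factorThruImage b = 0 := by
    apply (cancel_mono (Abelian.image.ι b)).1
    rw [Category.assoc, Abelian.image.fac, kernel.condition, zero_comp]
  haveI : Mono r := by
    apply Preadditive.mono_of_cancel_zero
    intro Z z hz
    have hze : z ≫ Abelian.factorThruImage b = 0 := by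
      rw [← hrfst, ← Category.assoc, hz, zero_comp]
    have hzw : z ≫ w.f₁ = 0 := by
      rw [← hrsnd, ← Category.assoc, hz, zero_comp]
    have hzb : z ≫ b = 0 := by
      calc z ≫ b = (z ≫ Abelian.factorThruImage b) ≫ Abelian.image.ι b := by
            rw [Category.assoc, Abelian.image.fac]
        _ = 0 := by rw [hze, zero_comp]
    have h1 : kernel.lift b z hzb ≫ w.kerMap = 0 := by
      apply (cancel_mono (kernel.ι b')).1
      rw [Category.assoc, kernel.lift_ι, ← Category.assoc, kernel.lift_ι, hzw, zero_comp]
    have h2 : kernel.lift b z hzb = 0 :=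
      (cancel_mono w.kerMap).1 (by rw [h1, zero_comp])
    rw [← kernel.lift_ι b z hzb, h2, zero_comp]
  haveI : Epi r := by
    apply Preadditive.epi_of_cancel_zero
    intro T t' ht'
    have hc : (kernel.ι (pullback.fst m (Abelian.factorThruImage b')) ≫
        pullback.snd m (Abelian.factorThruImage b')) ≫ b' = 0 := by
      calc (kernel.ι (pullback.fst m (Abelian.factorThruImage b')) ≫
            pullback.snd m (Abelian.factorThruImage b')) ≫ b'
          = kernel.ι (pullback.fst m (Abelian.factorThruImage b')) ≫
            (pullback.snd m (Abelian.factorThruImage b') ≫ Abelian.factorThruImage b') ≫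
            Abelian.image.ι b' := by simp only [Category.assoc, Abelian.image.fac]
        _ = (kernel.ι (pullback.fst m (Abelian.factorThruImage b')) ≫
            pullback.fst m (Abelian.factorThruImage b')) ≫ m ≫ Abelian.image.ι b' := by
            rw [← pullback.condition]; simp only [Category.assoc]
        _ = 0 := by rw [kernel.condition, zero_comp]
    set c := kernel.lift b' _ hc with hcdef
    set j := c ≫ inv w.kerMap ≫ kernel.ι b with hjdef
    have hje : j ≫ Abelian.factorThruImage b = 0 := by
      rw [hjdef, Category.assoc, Category.assoc, hιe, comp_zero, comp_zero]
    have hjr : j ≫ r = kernel.ι (pullback.fst m (Abelian.factorThruImage b')) := by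
      apply pullback.hom_ext
      · rw [Category.assoc, hrfst, hje, kernel.condition]
      · rw [Category.assoc, hrsnd, hjdef, Category.assoc, Category.assoc]
        have hwk : kernel.ι b ≫ w.f₁ = w.kerMap ≫ kernel.ι b' := (kernel.lift_ι _ _ _).symm
        rw [hwk, IsIso.inv_hom_id_assoc, hcdef, kernel.lift_ι]
    have hkt : kernel.ι (pullback.fst m (Abelian.factorThruImage b')) ≫ t' = 0 := by
      rw [← hjr, Category.assoc, ht', comp_zero]
    have htdesc := Abelian.comp_epiDesc (pullback.fst m (Abelian.factorThruImage b')) t' hkt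
    have hdz : Abelian.epiDesc (pullback.fst m (Abelian.factorThruImage b')) t' hkt = 0 := by
      apply (cancel_epi (Abelian.factorThruImage b)).1
      rw [comp_zero, ← hrfst, Category.assoc, htdesc, ht']
    rw [← htdesc, hdz, comp_zero]
  haveI : IsIso r := isIso_of_mono_of_epi r
  have hψπ : (a ≫ f₀) ≫ cokernel.π b = 0 := by
    rw [Category.assoc, hf₀, ht, ← Category.assoc, g.comm]
    simp
  set ψ := kernel.lift (cokernel.π b) (a ≫ f₀) hψπ with hψdef
  have hq : ψ ≫ m = h₁ ≫ Abelian.factorThruImage b' := by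
    apply (cancel_mono (Abelian.image.ι b')).1
    rw [Category.assoc, hmι, ← Category.assoc, hψdef, kernel.lift_ι, Category.assoc,
      Category.assoc, Abelian.image.fac, hh₁]
  set q := pullback.lift ψ h₁ hq with hqdef
  set f₁ := q ≫ inv r with hf₁def
  have hf₁e : f₁ ≫ Abelian.factorThruImage b = ψ := by
    rw [hf₁def, ← hrfst, Category.assoc, IsIso.inv_hom_id_assoc, hqdef, pullback.lift_fst]
  have hf₁b : f₁ ≫ b = a ≫ f₀ := by
    calc f₁ ≫ b = (f₁ ≫ Abelian.factorThruImage b) ≫ Abelian.image.ι b := by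
          rw [Category.assoc f₁ (Abelian.factorThruImage b) (Abelian.image.ι b),
            Abelian.image.fac]
      _ = ψ ≫ Abelian.image.ι b := by rw [hf₁e]
      _ = a ≫ f₀ := kernel.lift_ι _ _ _
  have hf₁w : f₁ ≫ w.f₁ = h₁ := by
    rw [hf₁def, ← hrsnd, Category.assoc, IsIso.inv_hom_id_assoc, hqdef, pullback.lift_snd]
  refine ⟨⟨f₀, f₁, hf₁b.symm⟩, β, ?_, ?_⟩
  · show f₁ ≫ w.f₁ - g.f₁ = a ≫ β
    rw [hf₁w, hh₁def]; abel
  · show f₀ ≫ w.f₀ - g.f₀ = β ≫ b'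
    rw [hβ]

end Aux

/-- Let `𝒜` be abelian, `a : A₁ ⟶ A₀` with `A₀` projective, and
`w : b ⟶ b'` a morphism of `𝒜^[1]` inducing isomorphisms on kernels and cokernels.
Then post-composition with `w` is a bijection on homotopy classes of morphisms
`a ⟶ b` → `a ⟶ b'`, and for every morphism `f : a ⟶ b`, composition with `w₁`
is a bijection from the self-homotopies of `f` to the self-homotopies of `w ∘ f`. -/
theorem bijective_postcomp_of_isIso_kerMap_cokerMap {A₁ A₀ B₁ B₀ B'₁ B'₀ : C}
    (a : A₁ ⟶ A₀) (b : B₁ ⟶ B₀) (b' : B'₁ ⟶ B'₀) [Projective A₀]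
    (w : ArrowMor b b') (hker : IsIso w.kerMap) (hcoker : IsIso w.cokerMap) :
    Function.Bijective
      (Quot.map (fun f : ArrowMor a b => f.comp w)
        (fun _ _ hfg => hfg.comp_right w) :
          Quot (Homotopic a b) → Quot (Homotopic a b')) ∧
    ∀ _f : ArrowMor a b,
      Function.Bijective
        (fun α : {α : A₀ ⟶ B₁ // a ≫ α = 0 ∧ α ≫ b = 0} =>
          (⟨α.1 ≫ w.f₁,
            by rw [← Category.assoc, α.2.1, zero_comp],
            by rw [Category.assoc, ← w.comm, ← Category.assoc, α.2.2, zero_comp]⟩ :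
            {β : A₀ ⟶ B'₁ // a ≫ β = 0 ∧ β ≫ b' = 0})) := by
  haveI := hker; haveI := hcoker
  constructor
  · constructor
    · intro x y h
      induction x using Quot.ind with | _ f => ?_
      induction y using Quot.ind with | _ g => ?_
      have h' : Quot.mk (Homotopic a b') (f.comp w) = Quot.mk (Homotopic a b') (g.comp w) := h
      have heq : Equivalence (Homotopic a b') :=
        ⟨Homotopic.refl, Homotopic.symm, Homotopic.trans⟩
      exact Quot.sound (homotopic_of_comp w hker hcoker f g (heq.eqvGen_iff.1 (Quot.eq.1 h')))
    · intro y
      induction y using Quot.ind with | _ g => ?_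
      obtain ⟨f, hf⟩ := exists_comp_homotopic w hker hcoker g
      exact ⟨Quot.mk _ f, Quot.sound hf⟩
  · intro _f
    constructor
    · intro α α' h
      have hv : α.1 ≫ w.f₁ = α'.1 ≫ w.f₁ := congrArg Subtype.val h
      have h1 : kernel.lift b α.1 α.2.2 ≫ w.kerMap = kernel.lift b α'.1 α'.2.2 ≫ w.kerMap := by
        apply (cancel_mono (kernel.ι b')).1
        rw [Category.assoc, Category.assoc, kernel.lift_ι, ← Category.assoc, ← Category.assoc,
          kernel.lift_ι, kernel.lift_ι, hv]
      have h2 := (cancel_mono w.kerMap).1 h1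
      apply Subtype.ext
      rw [← kernel.lift_ι b α.1 α.2.2, ← kernel.lift_ι b α'.1 α'.2.2, h2]
    · intro β
      have hab : a ≫ kernel.lift b' β.1 β.2.2 = 0 := by
        apply (cancel_mono (kernel.ι b')).1
        rw [Category.assoc, kernel.lift_ι, β.2.1, zero_comp]
      refine ⟨⟨kernel.lift b' β.1 β.2.2 ≫ inv w.kerMap ≫ kernel.ι b, ?_, ?_⟩, ?_⟩
      · rw [← Category.assoc, hab, zero_comp]
      · rw [Category.assoc, Category.assoc, kernel.condition, comp_zero, comp_zero]
      · apply Subtype.ext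
        show (kernel.lift b' β.1 β.2.2 ≫ inv w.kerMap ≫ kernel.ι b) ≫ w.f₁ = β.1
        have hwk : kernel.ι b ≫ w.f₁ = w.kerMap ≫ kernel.ι b' := (kernel.lift_ι _ _ _).symm
        rw [Category.assoc, Category.assoc, hwk, IsIso.inv_hom_id_assoc, kernel.lift_ι]
end

section
/- Let 𝒜 be an abelian category and let a : A₁ → A₀ and b : B₁ → B₀ be objects of the arrow 2-category 𝒜^[1] such that A₀ and B₀ are projective. If (f₀,f₁) : a → b is a morphism in 𝒜^[1] such that the induced morphisms ker a → ker b and coker a → coker b are isomorphisms, then (f₀,f₁) is a homotopy equivalence: there exists a morphism (g₀,g₁) : b → a in 𝒜^[1] such that (g₀,g₁) ∘ (f₀,f₁) is homotopic to the identity of a and (f₀,f₁) ∘ (g₀,g₁) is homotopic to the identity of b. -/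
open CategoryTheory CategoryTheory.Limits

universe v u

variable {C : Type u} [Category.{v} C] [Abelian C]

/-- Let `𝒜` be abelian and `a : A₁ ⟶ A₀`, `b : B₁ ⟶ B₀` objects of
`𝒜^[1]` with `A₀` and `B₀` projective.  Any morphism `(f₀,f₁) : a ⟶ b` inducing
isomorphisms on kernels and cokernels is a homotopy equivalence. -/
theorem homotopyEquiv_of_isIso_kerMap_cokerMap {A₁ A₀ B₁ B₀ : C}
    (a : A₁ ⟶ A₀) (b : B₁ ⟶ B₀) [Projective A₀] [Projective B₀]
    (f : ArrowMor a b) (hker : IsIso f.kerMap) (hcoker : IsIso f.cokerMap) :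
    ∃ g : ArrowMor b a,
      Homotopic a a (f.comp g) (ArrowMor.id a) ∧
      Homotopic b b (g.comp f) (ArrowMor.id b) := by
  classical
  -- the mapping cone short complex `A₁ ⟶ A₀ ⊞ B₁ ⟶ B₀`
  obtain ⟨d₂, hd₂⟩ : ∃ d, d = biprod.lift a (-f.f₁) := ⟨_, rfl⟩
  obtain ⟨d₁, hd₁⟩ : ∃ d, d = biprod.desc f.f₀ b := ⟨_, rfl⟩
  have hw : d₂ ≫ d₁ = 0 := by
    rw [hd₂, hd₁, biprod.lift_desc, Preadditive.neg_comp, f.comm]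
    abel
  -- `d₂` is a monomorphism
  have hmono : Mono d₂ := by
    apply Preadditive.mono_of_cancel_zero
    intro X g hg
    have hga : g ≫ a = 0 := by
      have h := hg =≫ biprod.fst
      rw [Category.assoc, hd₂, biprod.lift_fst, zero_comp] at h
      exact h
    have hgf : g ≫ f.f₁ = 0 := by
      have h := hg =≫ biprod.snd
      rw [Category.assoc, hd₂, biprod.lift_snd, zero_comp,
        Preadditive.comp_neg, neg_eq_zero] at h
      exact h
    have hfac : kernel.lift a g hga ≫ kernel.ι a = g := kernel.lift_ι _ _ _
    have h1 : kernel.lift a g hga ≫ f.kerMap = 0 := by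
      rw [← cancel_mono (kernel.ι b)]
      simp [ArrowMor.kerMap, hgf]
    have h2 : kernel.lift a g hga = 0 := by
      rw [← cancel_mono f.kerMap, h1, zero_comp]
    rw [← hfac, h2, zero_comp]
  -- `d₁` is an epimorphism
  have hepi : Epi d₁ := by
    apply Preadditive.epi_of_cancel_zero
    intro X g hg
    have hbg : b ≫ g = 0 := by
      have h := biprod.inr ≫= hg
      rw [← Category.assoc, hd₁, biprod.inr_desc, comp_zero] at h
      exact h
    have hfg : f.f₀ ≫ g = 0 := by
      have h := biprod.inl ≫= hg
      rw [← Category.assoc, hd₁, biprod.inl_desc, comp_zero] at h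
      exact h
    have hfac : cokernel.π b ≫ cokernel.desc b g hbg = g := cokernel.π_desc _ _ _
    have h1 : f.cokerMap ≫ cokernel.desc b g hbg = 0 := by
      rw [← cancel_epi (cokernel.π a)]
      simp [ArrowMor.cokerMap, hfg]
    have h2 : cokernel.desc b g hbg = 0 := by
      rw [← cancel_epi f.cokerMap, h1, comp_zero]
    rw [← hfac, h2, comp_zero]
  -- the short complex and its exactness
  have hS : (ShortComplex.mk d₂ d₁ hw).Exact := by
    rw [ShortComplex.exact_iff_exact_up_to_refinements]
    intro X x₀ hx₀
    obtain ⟨x, hxeq⟩ : ∃ y : X ⟶ A₀ ⊞ B₁, y = x₀ := ⟨x₀, rfl⟩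
    have hx : x ≫ d₁ = 0 := by rw [hxeq]; exact hx₀
    obtain ⟨t₀, ht₀⟩ : ∃ t, t = x ≫ biprod.fst := ⟨_, rfl⟩
    obtain ⟨t₁, ht₁⟩ : ∃ t, t = x ≫ biprod.snd := ⟨_, rfl⟩
    have hsum : t₀ ≫ f.f₀ + t₁ ≫ b = 0 := by
      calc t₀ ≫ f.f₀ + t₁ ≫ b
          = x ≫ (biprod.fst ≫ f.f₀ + biprod.snd ≫ b) := by
            rw [Preadditive.comp_add, ht₀, ht₁, Category.assoc, Category.assoc]
        _ = x ≫ d₁ := by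
            rw [biprod.desc_eq] at hd₁
            rw [← hd₁]
        _ = 0 := hx
    -- `t₀` kills the cokernel projection
    have hπ : t₀ ≫ cokernel.π a = 0 := by
      have ht : t₀ ≫ f.f₀ = -(t₁ ≫ b) := eq_neg_of_add_eq_zero_left hsum
      have h1 : t₀ ≫ cokernel.π a ≫ f.cokerMap = 0 := by
        have hc : cokernel.π a ≫ f.cokerMap = f.f₀ ≫ cokernel.π b := by
          simp [ArrowMor.cokerMap]
        rw [hc, ← Category.assoc, ht, Preadditive.neg_comp, Category.assoc,
          cokernel.condition, comp_zero, neg_zero]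
      rw [← cancel_mono f.cokerMap, Category.assoc, h1, zero_comp]
    -- factor `t₀` through the image of `a` and refine by a pullback
    obtain ⟨t₀', ht₀'⟩ : ∃ t' : X ⟶ Abelian.image a, t' ≫ Abelian.image.ι a = t₀ :=
      ⟨kernel.lift (cokernel.π a) t₀ hπ, kernel.lift_ι _ _ _⟩
    obtain ⟨P, π, u, hπepi, hpc⟩ :
        ∃ (P : C) (π : P ⟶ X) (u : P ⟶ A₁), Epi π ∧
          π ≫ t₀' = u ≫ Abelian.factorThruImage a :=
      ⟨pullback t₀' (Abelian.factorThruImage a), pullback.fst _ _,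
        pullback.snd _ _, inferInstance, pullback.condition⟩
    have hu : u ≫ a = π ≫ t₀ := by
      rw [← ht₀', ← Category.assoc, hpc, Category.assoc, Abelian.image.fac]
    -- the element `v` lands in the kernel of `b`
    obtain ⟨v, hv⟩ : ∃ v, v = π ≫ t₁ + u ≫ f.f₁ := ⟨_, rfl⟩
    have hvb : v ≫ b = 0 := by
      have h2 : u ≫ (f.f₁ ≫ b) = π ≫ (t₀ ≫ f.f₀) := by
        rw [← f.comm, ← Category.assoc, hu, Category.assoc]
      calc v ≫ b = π ≫ (t₁ ≫ b) + u ≫ (f.f₁ ≫ b) := by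
            rw [hv, Preadditive.add_comp, Category.assoc, Category.assoc]
        _ = π ≫ (t₁ ≫ b) + π ≫ (t₀ ≫ f.f₀) := by rw [h2]
        _ = π ≫ (t₀ ≫ f.f₀ + t₁ ≫ b) := by
            rw [Preadditive.comp_add]; abel
        _ = 0 := by rw [hsum, comp_zero]
    -- transport back through the kernel isomorphism
    obtain ⟨v', hv'⟩ : ∃ v' : P ⟶ kernel b, v' ≫ kernel.ι b = v :=
      ⟨kernel.lift b v hvb, kernel.lift_ι _ _ _⟩
    obtain ⟨w, hwdef⟩ : ∃ w : P ⟶ A₁, w = v' ≫ inv f.kerMap ≫ kernel.ι a := ⟨_, rfl⟩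
    have hwa : w ≫ a = 0 := by
      rw [hwdef]; simp
    have hwf : w ≫ f.f₁ = v := by
      have hk : kernel.ι a ≫ f.f₁ = f.kerMap ≫ kernel.ι b := by
        simp [ArrowMor.kerMap]
      rw [hwdef, Category.assoc, Category.assoc, hk, ← Category.assoc (inv f.kerMap),
        IsIso.inv_hom_id, Category.id_comp, hv']
    refine ⟨P, π, hπepi, u - w, ?_⟩
    rw [← hxeq]
    show π ≫ x = (u - w) ≫ d₂
    have h₂fst : d₂ ≫ biprod.fst = a := by rw [hd₂, biprod.lift_fst]
    have h₂snd : d₂ ≫ biprod.snd = -f.f₁ := by rw [hd₂, biprod.lift_snd]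
    apply biprod.hom_ext
    · calc (π ≫ x) ≫ biprod.fst = π ≫ t₀ := by rw [Category.assoc, ht₀]
        _ = (u - w) ≫ a := by rw [Preadditive.sub_comp, hwa, sub_zero, hu]
        _ = ((u - w) ≫ d₂) ≫ biprod.fst := by rw [Category.assoc, h₂fst]
    · calc (π ≫ x) ≫ biprod.snd = π ≫ t₁ := by rw [Category.assoc, ht₁]
        _ = (u - w) ≫ (-f.f₁) := by
            rw [Preadditive.comp_neg, Preadditive.sub_comp, hwf, hv]
            abel
        _ = ((u - w) ≫ d₂) ≫ biprod.snd := by rw [Category.assoc, h₂snd]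
  -- split using projectivity of `B₀`
  haveI : Epi d₁ := hepi
  obtain ⟨σ, hσ⟩ : ∃ σ : B₀ ⟶ A₀ ⊞ B₁, σ ≫ d₁ = 𝟙 B₀ :=
    ⟨Projective.factorThru (𝟙 B₀) d₁, Projective.factorThru_comp _ _⟩
  haveI : Mono (ShortComplex.mk d₂ d₁ hw).f := hmono
  obtain ⟨ρ, hρ'⟩ : ∃ ρ : A₀ ⊞ B₁ ⟶ A₁, ρ ≫ d₂ = 𝟙 (A₀ ⊞ B₁) - d₁ ≫ σ := by
    obtain ⟨ρ₀, h₀⟩ := KernelFork.IsLimit.lift' hS.fIsKernel (𝟙 (A₀ ⊞ B₁) - d₁ ≫ σ)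
      (show (𝟙 (A₀ ⊞ B₁) - d₁ ≫ σ) ≫ d₁ = 0 by
        rw [Preadditive.sub_comp, Category.id_comp, Category.assoc, hσ,
          Category.comp_id, sub_self])
    exact ⟨ρ₀, h₀⟩
  have hρd : d₂ ≫ ρ = 𝟙 A₁ := by
    rw [← cancel_mono d₂, Category.assoc, hρ', Preadditive.comp_sub,
      Category.comp_id, ← Category.assoc, hw, zero_comp, sub_zero,
      Category.id_comp]
  -- extract the components
  obtain ⟨g₀, β, hσc⟩ : ∃ g₀ β, σ = biprod.lift g₀ β :=
    ⟨σ ≫ biprod.fst, σ ≫ biprod.snd, by apply biprod.hom_ext <;> simp⟩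
  obtain ⟨p, q, hρc⟩ : ∃ p q, ρ = biprod.desc p q :=
    ⟨biprod.inl ≫ ρ, biprod.inr ≫ ρ, by apply biprod.hom_ext' <;> simp⟩
  -- the equations coming from the splitting
  have hE1 : g₀ ≫ f.f₀ + β ≫ b = 𝟙 B₀ := by
    rw [← hσ, hσc, hd₁, biprod.lift_desc]
  have hE2 : a ≫ p - f.f₁ ≫ q = 𝟙 A₁ := by
    rw [← hρd, hd₂, hρc, biprod.lift_desc, Preadditive.neg_comp, ← sub_eq_add_neg]
  have hE3 : p ≫ a = 𝟙 A₀ - f.f₀ ≫ g₀ := by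
    have h := (biprod.inl ≫= hρ') =≫ biprod.fst
    simpa [hρc, hσc, hd₂, hd₁] using h
  have hE5 : q ≫ a = -(b ≫ g₀) := by
    have h := (biprod.inr ≫= hρ') =≫ biprod.fst
    simpa [hρc, hσc, hd₂, hd₁] using h
  have hE6 : q ≫ f.f₁ = b ≫ β - 𝟙 B₁ := by
    have h := (biprod.inr ≫= hρ') =≫ biprod.snd
    simp only [hρc, hσc, hd₂, hd₁, Category.assoc, biprod.inr_desc_assoc,
      biprod.lift_snd, Preadditive.comp_sub, Preadditive.sub_comp,
      Category.comp_id, Category.id_comp, biprod.inr_snd,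
      Preadditive.comp_neg] at h
    rw [← neg_eq_iff_eq_neg.2 h.symm]
    abel
  -- the homotopy inverse
  refine ⟨⟨g₀, -q, by rw [Preadditive.neg_comp, hE5, neg_neg]⟩, ⟨-p, ?_, ?_⟩,
    ⟨-β, ?_, ?_⟩⟩
  · show f.f₁ ≫ (-q) - 𝟙 A₁ = a ≫ (-p)
    rw [Preadditive.comp_neg, Preadditive.comp_neg, ← hE2]
    abel
  · show f.f₀ ≫ g₀ - 𝟙 A₀ = (-p) ≫ a
    rw [Preadditive.neg_comp, hE3]
    abel
  · show (-q) ≫ f.f₁ - 𝟙 B₁ = b ≫ (-β)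
    rw [Preadditive.neg_comp, hE6, Preadditive.comp_neg]
    abel
  · show g₀ ≫ f.f₀ - 𝟙 B₀ = (-β) ≫ b
    rw [Preadditive.neg_comp, ← hE1]
    abel
end

section
/- Let 𝒜 be an abelian category with enough projectives and let (f₀,f₁) : a → b be a morphism between objects a : A₁ → A₀ and b : B₁ → B₀ of the arrow 2-category 𝒜^[1] with A₀ and B₀ projective. Then the following are equivalent: (1) for every object x : X₁ → X₀ of 𝒜^[1] with X₀ projective and every α : X₀ → A₁ with α ∘ x = 0 and a ∘ α = 0, the vanishing f₁ ∘ α = 0 implies α = 0; (2) the induced morphism ker a → ker b is a monomorphism; (3) the morphism (−a, f₁) : A₁ → A₀ ⊕ B₁ with components −a and f₁ is a monomorphism in 𝒜. -/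
open CategoryTheory CategoryTheory.Limits

universe v u

variable {C : Type u} [Category.{v} C] [Abelian C]

/-- Let `𝒜` be abelian with enough projectives and `(f₀,f₁) : a ⟶ b` a
morphism of `𝒜^[1]` with `A₀`, `B₀` projective.  TFAE: (1) `(f₀,f₁)` is faithful (whiskering
kills no nonzero self-homotopy from an object of `𝒜^[1]_c`); (2) the induced morphism
`ker a ⟶ ker b` is a monomorphism; (3) `(-a, f₁) : A₁ ⟶ A₀ ⊕ B₁` is a monomorphism. -/
theorem faithful_tfae [EnoughProjectives C] {A₁ A₀ B₁ B₀ : C}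
    (a : A₁ ⟶ A₀) (b : B₁ ⟶ B₀) [Projective A₀] [Projective B₀] (f : ArrowMor a b) :
    [∀ (X₁ X₀ : C) (x : X₁ ⟶ X₀), Projective X₀ →
        ∀ α : X₀ ⟶ A₁, x ≫ α = 0 → α ≫ a = 0 → α ≫ f.f₁ = 0 → α = 0,
      Mono f.kerMap,
      Mono (biprod.lift (-a) f.f₁)].TFAE := by
  tfae_have 1 → 3 := by
    intro h
    rw [Preadditive.mono_iff_cancel_zero]
    intro T g hg
    have ha : g ≫ a = 0 := by
      have := hg =≫ biprod.fst
      simp only [Category.assoc, biprod.lift_fst, zero_comp, Preadditive.comp_neg,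
        neg_eq_zero] at this
      exact this
    have hf : g ≫ f.f₁ = 0 := by
      have := hg =≫ biprod.snd
      simpa using this
    have h0 := h (Projective.over T) (Projective.over T) 0 (Projective.projective_over T)
      (Projective.π T ≫ g) (by simp) (by simp [Category.assoc, ha])
      (by simp [Category.assoc, hf])
    exact zero_of_epi_comp (Projective.π T) h0
  tfae_have 3 → 1 := by
    intro h X₁ X₀ x _ α hx ha hf
    rw [Preadditive.mono_iff_cancel_zero] at h
    refine h _ α ?_
    apply biprod.hom_ext <;> simp [ha, hf]
  tfae_have 3 → 2 := by
    intro h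
    rw [Preadditive.mono_iff_cancel_zero] at h ⊢
    intro T t ht
    have h1 : (t ≫ kernel.ι a) ≫ biprod.lift (-a) f.f₁ = 0 := by
      apply biprod.hom_ext
      · simp
      · have := ht =≫ kernel.ι b
        simp only [Category.assoc, kernel.lift_ι, zero_comp] at this ⊢
        simpa using this
    have := h _ _ h1
    exact zero_of_comp_mono (kernel.ι a) this
  tfae_have 2 → 3 := by
    intro h
    rw [Preadditive.mono_iff_cancel_zero] at h ⊢
    intro T g hg
    have ha : g ≫ a = 0 := by
      have := hg =≫ biprod.fst
      simp only [Category.assoc, biprod.lift_fst, zero_comp, Preadditive.comp_neg,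
        neg_eq_zero] at this
      exact this
    have hf : g ≫ f.f₁ = 0 := by
      have := hg =≫ biprod.snd
      simpa using this
    have h1 : kernel.lift a g ha ≫ f.kerMap = 0 := by
      rw [← cancel_mono (kernel.ι b)]
      simp [hf]
    have := h _ _ h1
    calc g = kernel.lift a g ha ≫ kernel.ι a := by simp
    _ = 0 := by rw [this, zero_comp]
  tfae_finish
end

section
/- Let 𝒜 be an abelian category with enough projectives and let (f₀,f₁) : a → b be a morphism between objects a : A₁ → A₀ and b : B₁ → B₀ of the arrow 2-category 𝒜^[1] with A₀ and B₀ projective. Then the following are equivalent: (1) for every object x : X₁ → X₀ of 𝒜^[1] with X₀ projective, the map α ↦ f₁ ∘ α is a bijection from {α : X₀ → A₁ | α ∘ x = 0, a ∘ α = 0} onto {β : X₀ → B₁ | β ∘ x = 0, b ∘ β = 0}, and post-composition with (f₀,f₁) is injective on homotopy classes of morphisms x → a; (2) the induced morphism ker a → ker b is an isomorphism and the induced morphism coker a → coker b is a monomorphism. -/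
open CategoryTheory CategoryTheory.Limits

universe v u

variable {C : Type u} [Category.{v} C] [Abelian C]

section Aux

variable {A₁ A₀ B₁ B₀ : C} {a : A₁ ⟶ A₀} {b : B₁ ⟶ B₀}

/-- A map from a projective with zero composite to the cokernel lifts through the arrow. -/
theorem exists_lift_of_comp_cokernel_zero {P X Y : C} [Projective P] (h : X ⟶ Y) (g : P ⟶ Y)
    (hg : g ≫ cokernel.π h = 0) : ∃ β : P ⟶ X, β ≫ h = g := by
  refine ⟨Projective.factorThru (kernel.lift (cokernel.π h) g hg)
    (Abelian.factorThruImage h), ?_⟩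
  conv_rhs => rw [← kernel.lift_ι (cokernel.π h) g hg,
    ← Projective.factorThru_comp (kernel.lift (cokernel.π h) g hg) (Abelian.factorThruImage h)]
  rw [Category.assoc, Abelian.image.fac h]

theorem homotopic_of_homotopic_comp {X₁ X₀ : C} [Projective X₀] (f : ArrowMor a b)
    (hker : IsIso f.kerMap) (hcoker : Mono f.cokerMap)
    {x : X₁ ⟶ X₀} (u v : ArrowMor x a) (h : Homotopic x b (u.comp f) (v.comp f)) :
    Homotopic x a u v := by
  obtain ⟨β, hβ₁, hβ₀⟩ := h
  simp only [ArrowMor.comp] at hβ₁ hβ₀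
  set w₀ : X₀ ⟶ A₀ := u.f₀ - v.f₀ with hw₀
  set w₁ : X₁ ⟶ A₁ := u.f₁ - v.f₁ with hw₁
  have hcomm : x ≫ w₀ = w₁ ≫ a := by
    simp [hw₀, hw₁, Preadditive.comp_sub, Preadditive.sub_comp, u.comm, v.comm]
  have hβ₁' : w₁ ≫ f.f₁ = x ≫ β := by
    rw [hw₁, Preadditive.sub_comp]; exact hβ₁
  have hβ₀' : w₀ ≫ f.f₀ = β ≫ b := by
    rw [hw₀, Preadditive.sub_comp]; exact hβ₀
  -- `w₀` dies in the cokernel of `a`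
  have hw0coker : w₀ ≫ cokernel.π a = 0 := by
    rw [← cancel_mono f.cokerMap]
    have : cokernel.π a ≫ f.cokerMap = f.f₀ ≫ cokernel.π b := by simp
    rw [Category.assoc, this, ← Category.assoc, hβ₀', Category.assoc, cokernel.condition,
      comp_zero, zero_comp]
  obtain ⟨α, hα⟩ := exists_lift_of_comp_cokernel_zero a w₀ hw0coker
  -- the defects
  have hδa : (w₁ - x ≫ α) ≫ a = 0 := by
    rw [Preadditive.sub_comp, Category.assoc, hα, hcomm, sub_self]
  have hεb : (β - α ≫ f.f₁) ≫ b = 0 := by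
    rw [Preadditive.sub_comp, ← hβ₀', Category.assoc, ← f.comm, ← Category.assoc, hα, sub_self]
  set δ' : X₁ ⟶ kernel a := kernel.lift a _ hδa with hδ'
  set ε' : X₀ ⟶ kernel b := kernel.lift b _ hεb with hε'
  have key : δ' ≫ f.kerMap = x ≫ ε' := by
    rw [← cancel_mono (kernel.ι b)]
    have h1 : f.kerMap ≫ kernel.ι b = kernel.ι a ≫ f.f₁ := by simp
    rw [Category.assoc, h1, ← Category.assoc, hδ', kernel.lift_ι, Category.assoc, hε',
      kernel.lift_ι, Preadditive.sub_comp, hβ₁', Preadditive.comp_sub, Category.assoc]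
  refine ⟨α + (ε' ≫ inv f.kerMap) ≫ kernel.ι a, ?_, ?_⟩
  · have hxγ : x ≫ (ε' ≫ inv f.kerMap) ≫ kernel.ι a = w₁ - x ≫ α := by
      rw [← Category.assoc, ← Category.assoc, ← key, Category.assoc δ' _ (inv f.kerMap),
        IsIso.hom_inv_id, Category.comp_id, hδ', kernel.lift_ι]
    rw [Preadditive.comp_add, hxγ, hw₁]; abel
  · rw [Preadditive.add_comp, Category.assoc, kernel.condition, comp_zero, add_zero, hα]

end Aux

/-- Let `𝒜` be abelian with enough projectives and `(f₀,f₁) : a ⟶ b` a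
morphism of `𝒜^[1]` with `A₀`, `B₀` projective.  Then `(f₀,f₁)` is fully faithful (for every
`x : X₁ ⟶ X₀` with `X₀` projective, whiskering is bijective on self-homotopies of morphisms
`x ⟶ a` and post-composition is injective on homotopy classes `x ⟶ a`) iff the induced
morphism `ker a ⟶ ker b` is an isomorphism and `coker a ⟶ coker b` is a monomorphism. -/
theorem fullyFaithful_iff [EnoughProjectives C] {A₁ A₀ B₁ B₀ : C}
    (a : A₁ ⟶ A₀) (b : B₁ ⟶ B₀) [Projective A₀] [Projective B₀] (f : ArrowMor a b) :
    (∀ (X₁ X₀ : C) (x : X₁ ⟶ X₀), Projective X₀ →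
      (Function.Bijective
        (fun α : {α : X₀ ⟶ A₁ // x ≫ α = 0 ∧ α ≫ a = 0} =>
          (⟨α.1 ≫ f.f₁,
            by rw [← Category.assoc, α.2.1, zero_comp],
            by rw [Category.assoc, ← f.comm, ← Category.assoc, α.2.2, zero_comp]⟩ :
            {β : X₀ ⟶ B₁ // x ≫ β = 0 ∧ β ≫ b = 0})) ∧
       Function.Injective
        (Quot.map (fun u : ArrowMor x a => u.comp f)
          (fun _ _ huv => huv.comp_right f) :
            Quot (Homotopic x a) → Quot (Homotopic x b)))) ↔
    (IsIso f.kerMap ∧ Mono f.cokerMap) := by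
  constructor
  · intro h
    have hequiv : ∀ (X₁ X₀ : C) (x : X₁ ⟶ X₀), Equivalence (Homotopic x a) :=
      fun _ _ _ => ⟨Homotopic.refl, Homotopic.symm, Homotopic.trans⟩
    constructor
    · -- `kerMap` is an isomorphism
      have hepi : Epi f.kerMap := by
        set P := Projective.over (kernel b)
        obtain ⟨hbij, _⟩ := h P P 0 inferInstance
        obtain ⟨α, hα⟩ := hbij.2 ⟨Projective.π (kernel b) ≫ kernel.ι b, zero_comp,
          by rw [Category.assoc, kernel.condition, comp_zero]⟩
        have hα' : α.1 ≫ f.f₁ = Projective.π (kernel b) ≫ kernel.ι b :=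
          congrArg Subtype.val hα
        have hfac : kernel.lift a α.1 α.2.2 ≫ f.kerMap = Projective.π (kernel b) := by
          rw [← cancel_mono (kernel.ι b)]
          have h1 : f.kerMap ≫ kernel.ι b = kernel.ι a ≫ f.f₁ := by simp
          rw [Category.assoc, h1, ← Category.assoc, kernel.lift_ι, hα']
        have : Epi (kernel.lift a α.1 α.2.2 ≫ f.kerMap) := by
          rw [hfac]; infer_instance
        exact epi_of_epi (kernel.lift a α.1 α.2.2) f.kerMap
      have hmono : Mono f.kerMap := by
        rw [Preadditive.mono_iff_cancel_zero]
        intro T t ht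
        set P := Projective.over T
        obtain ⟨hbij, _⟩ := h P P 0 inferInstance
        have h1 : kernel.ι a ≫ f.f₁ = f.kerMap ≫ kernel.ι b := by simp
        have hzero : (Projective.π T ≫ t ≫ kernel.ι a) ≫ f.f₁ = 0 := by
          rw [Category.assoc, Category.assoc, h1, ← Category.assoc t, ht, zero_comp, comp_zero]
        have := hbij.1 (a₁ := ⟨Projective.π T ≫ t ≫ kernel.ι a, zero_comp,
            by rw [Category.assoc, Category.assoc, kernel.condition, comp_zero, comp_zero]⟩)
          (a₂ := ⟨0, zero_comp, zero_comp⟩)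
          (by apply Subtype.ext; simp [hzero])
        have h2 : Projective.π T ≫ t ≫ kernel.ι a = 0 := congrArg Subtype.val this
        rw [← cancel_epi (Projective.π T), comp_zero, ← cancel_mono (kernel.ι a),
          zero_comp, Category.assoc]
        exact h2
      exact isIso_of_mono_of_epi _
    · -- `cokerMap` is a monomorphism
      rw [Preadditive.mono_iff_cancel_zero]
      intro T t ht
      set P := Projective.over T
      obtain ⟨_, hinj⟩ := h P P 0 inferInstance
      set w₀ : P ⟶ A₀ := Projective.factorThru (Projective.π T ≫ t) (cokernel.π a) with hw₀
      have hw₀fac : w₀ ≫ cokernel.π a = Projective.π T ≫ t := Projective.factorThru_comp _ _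
      have hcok : (w₀ ≫ f.f₀) ≫ cokernel.π b = 0 := by
        have h1 : cokernel.π a ≫ f.cokerMap = f.f₀ ≫ cokernel.π b := by simp
        rw [Category.assoc, ← h1, ← Category.assoc, hw₀fac, Category.assoc, ht, comp_zero]
      obtain ⟨β, hβ⟩ := exists_lift_of_comp_cokernel_zero b (w₀ ≫ f.f₀) hcok
      set u : ArrowMor (0 : P ⟶ P) a := ⟨w₀, 0, by simp⟩ with hu
      set v : ArrowMor (0 : P ⟶ P) a := ⟨0, 0, by simp⟩ with hv
      have hcompHtpy : Homotopic (0 : P ⟶ P) b (u.comp f) (v.comp f) := by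
        refine ⟨β, ?_, ?_⟩
        · simp [ArrowMor.comp, hu, hv]
        · simp [ArrowMor.comp, hu, hv, hβ]
      have hqeq : Quot.mk (Homotopic (0 : P ⟶ P) a) u = Quot.mk _ v := by
        apply hinj
        exact Quot.sound hcompHtpy
      have huv : Homotopic (0 : P ⟶ P) a u v :=
        ((hequiv P P 0).eqvGen_iff).mp (Quot.eq.mp hqeq)
      obtain ⟨α, _, hα₀⟩ := huv
      have : w₀ = α ≫ a := by simpa [hu, hv] using hα₀
      rw [← cancel_epi (Projective.π T), comp_zero, ← hw₀fac, this, Category.assoc,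
        cokernel.condition, comp_zero]
  · rintro ⟨hker, hcoker⟩ X₁ X₀ x hX₀
    constructor
    · constructor
      · -- injective
        rintro ⟨α₁, hα₁x, hα₁a⟩ ⟨α₂, hα₂x, hα₂a⟩ heq
        have heq' : α₁ ≫ f.f₁ = α₂ ≫ f.f₁ := congrArg Subtype.val heq
        apply Subtype.ext
        have h1 : kernel.ι a ≫ f.f₁ = f.kerMap ≫ kernel.ι b := by simp
        have h2 : kernel.lift a α₁ hα₁a = kernel.lift a α₂ hα₂a := by
          rw [← cancel_mono f.kerMap, ← cancel_mono (kernel.ι b)]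
          rw [Category.assoc, Category.assoc, ← h1, ← Category.assoc, ← Category.assoc,
            kernel.lift_ι, kernel.lift_ι, heq']
        calc α₁ = kernel.lift a α₁ hα₁a ≫ kernel.ι a := (kernel.lift_ι _ _ _).symm
          _ = kernel.lift a α₂ hα₂a ≫ kernel.ι a := by rw [h2]
          _ = α₂ := kernel.lift_ι _ _ _
      · -- surjective
        rintro ⟨β, hβx, hβb⟩
        set α : X₀ ⟶ A₁ := (kernel.lift b β hβb ≫ inv f.kerMap) ≫ kernel.ι a with hαdef
        have hαa : α ≫ a = 0 := by rw [hαdef, Category.assoc, kernel.condition, comp_zero]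
        have h1 : kernel.ι a ≫ f.f₁ = f.kerMap ≫ kernel.ι b := by simp
        have hαf : α ≫ f.f₁ = β := by
          rw [hαdef, Category.assoc, h1, ← Category.assoc, Category.assoc _ _ f.kerMap,
            IsIso.inv_hom_id, Category.comp_id, kernel.lift_ι]
        have hxβ' : x ≫ kernel.lift b β hβb = 0 := by
          rw [← cancel_mono (kernel.ι b), Category.assoc, kernel.lift_ι, hβx, zero_comp]
        have hαx : x ≫ α = 0 := by
          rw [hαdef, ← Category.assoc, ← Category.assoc, hxβ', zero_comp, zero_comp]
        exact ⟨⟨α, hαx, hαa⟩, Subtype.ext hαf⟩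
    · -- injective on homotopy classes
      intro q₁ q₂ hq
      induction q₁ using Quot.ind with | _ u =>
      induction q₂ using Quot.ind with | _ v =>
      have hcomp : Homotopic x b (u.comp f) (v.comp f) :=
        ((⟨Homotopic.refl, Homotopic.symm, Homotopic.trans⟩ :
          Equivalence (Homotopic x b)).eqvGen_iff).mp (Quot.eq.mp hq)
      exact Quot.sound (homotopic_of_homotopic_comp f hker hcoker u v hcomp)
end

section
/- Let 𝒜 be an abelian category and let (f₀,f₁) : a → b be a morphism between objects a : A₁ → A₀ and b : B₁ → B₀ of the arrow 2-category 𝒜^[1]. Then the following are equivalent: (1) for every object N of 𝒜 and every β : B₀ → N, the vanishings β ∘ f₀ = 0 and β ∘ b = 0 imply β = 0; (2) the induced morphism coker a → coker b is an epimorphism; (3) the morphism (f₀, b) : A₀ ⊕ B₁ → B₀ determined by f₀ and b is an epimorphism in 𝒜. -/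
open CategoryTheory CategoryTheory.Limits

universe v u

variable {C : Type u} [Category.{v} C] [Abelian C]

/-- Let `𝒜` be abelian and `(f₀,f₁) : a ⟶ b` a morphism of `𝒜^[1]`.
TFAE: (1) `(f₀,f₁)` is cofaithful (any `β : B₀ ⟶ N` with `β ∘ f₀ = 0` and `β ∘ b = 0`
vanishes); (2) the induced morphism `coker a ⟶ coker b` is an epimorphism;
(3) `(f₀, b) : A₀ ⊕ B₁ ⟶ B₀` is an epimorphism. -/
theorem cofaithful_tfae {A₁ A₀ B₁ B₀ : C}
    (a : A₁ ⟶ A₀) (b : B₁ ⟶ B₀) (f : ArrowMor a b) :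
    [∀ (N : C) (β : B₀ ⟶ N), f.f₀ ≫ β = 0 → b ≫ β = 0 → β = 0,
      Epi f.cokerMap,
      Epi (biprod.desc f.f₀ b)].TFAE := by
  tfae_have 1 → 3 := by
    intro h
    rw [Preadditive.epi_iff_cancel_zero]
    intro Z g hg
    exact h Z g (by simpa using biprod.inl ≫= hg) (by simpa using biprod.inr ≫= hg)
  tfae_have 3 → 1 := by
    intro h N β h₀ hb
    rw [Preadditive.epi_iff_cancel_zero] at h
    refine h N β ?_
    apply biprod.hom_ext' <;> simp [h₀, hb]
  tfae_have 1 → 2 := by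
    intro h
    rw [Preadditive.epi_iff_cancel_zero]
    intro Z g hg
    have key : f.f₀ ≫ cokernel.π b ≫ g = 0 := by
      have := cokernel.π a ≫= hg
      rw [comp_zero, ← Category.assoc, cokernel.π_desc] at this
      simpa using this
    have hb : b ≫ cokernel.π b ≫ g = 0 := by
      rw [← Category.assoc, cokernel.condition, zero_comp]
    have := h Z (cokernel.π b ≫ g) key hb
    rwa [← cancel_epi (cokernel.π b), comp_zero]
  tfae_have 2 → 1 := by
    intro h N β h₀ hb
    rw [Preadditive.epi_iff_cancel_zero] at h
    have : f.cokerMap ≫ cokernel.desc b β hb = 0 := by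
      rw [← cancel_epi (cokernel.π a), comp_zero, ← Category.assoc, cokernel.π_desc,
        Category.assoc, cokernel.π_desc]
      exact h₀
    have := h N (cokernel.desc b β hb) this
    calc β = cokernel.π b ≫ cokernel.desc b β hb := by rw [cokernel.π_desc]
    _ = 0 := by rw [this, comp_zero]
  tfae_finish
end

section
/- Let 𝒜 be an abelian category with enough projectives and let (f₀,f₁) : a → b be a morphism between objects a : A₁ → A₀ and b : B₁ → B₀ of the arrow 2-category 𝒜^[1] with A₀ and B₀ projective. Then the following are equivalent: (1) for every object x : X₁ → X₀ of 𝒜^[1] with X₀ projective, the map β ↦ β ∘ f₀ is a bijection from {β : B₀ → X₁ | β ∘ b = 0, x ∘ β = 0} onto {γ : A₀ → X₁ | γ ∘ a = 0, x ∘ γ = 0}, and pre-composition with (f₀,f₁) is injective on homotopy classes of morphisms b → x; (2) the induced morphism coker a → coker b is an isomorphism and the induced morphism ker a → ker b is an epimorphism. -/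
open CategoryTheory CategoryTheory.Limits

universe v u

section Aux

variable {C : Type u} [Category.{v} C] [Abelian C] {A₁ A₀ B₁ B₀ : C}
  {a : A₁ ⟶ A₀} {b : B₁ ⟶ B₀}

theorem aux_pi_cokerMap (f : ArrowMor a b) :
    cokernel.π a ≫ f.cokerMap = f.f₀ ≫ cokernel.π b := cokernel.π_desc _ _ _

theorem aux_kerMap_iota (f : ArrowMor a b) :
    f.kerMap ≫ kernel.ι b = kernel.ι a ≫ f.f₁ := kernel.lift_ι _ _ _

/-- If the map on cokernels is epi, then `(f₀, b) : A₀ ⊞ B₁ ⟶ B₀` is epi. -/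
theorem aux_d1_epi (f : ArrowMor a b) (h : Epi f.cokerMap) :
    Epi (biprod.desc f.f₀ b) := by
  apply Abelian.epi_of_cokernel_π_eq_zero
  have hb : b ≫ cokernel.π (biprod.desc f.f₀ b) = 0 := by
    calc b ≫ cokernel.π (biprod.desc f.f₀ b)
        = biprod.inr ≫ biprod.desc f.f₀ b ≫ cokernel.π (biprod.desc f.f₀ b) := by
          rw [← Category.assoc, biprod.inr_desc]
      _ = 0 := by rw [cokernel.condition, comp_zero]
  have hf : f.f₀ ≫ cokernel.π (biprod.desc f.f₀ b) = 0 := by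
    calc f.f₀ ≫ cokernel.π (biprod.desc f.f₀ b)
        = biprod.inl ≫ biprod.desc f.f₀ b ≫ cokernel.π (biprod.desc f.f₀ b) := by
          rw [← Category.assoc, biprod.inl_desc]
      _ = 0 := by rw [cokernel.condition, comp_zero]
  have h2 : f.cokerMap ≫ cokernel.desc b (cokernel.π (biprod.desc f.f₀ b)) hb = 0 := by
    rw [← cancel_epi (cokernel.π a), ← Category.assoc, aux_pi_cokerMap, Category.assoc,
      cokernel.π_desc, hf, comp_zero]
  have h3 : cokernel.desc b (cokernel.π (biprod.desc f.f₀ b)) hb = 0 := by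
    rw [← cancel_epi f.cokerMap, h2, comp_zero]
  rw [← cokernel.π_desc b (cokernel.π (biprod.desc f.f₀ b)) hb, h3, comp_zero]

/-- Middle exactness of the cone `A₁ ⟶ A₀ ⊞ B₁ ⟶ B₀` when the map on cokernels is mono
and the map on kernels is epi. -/
theorem aux_cone_exact (f : ArrowMor a b) (hc : Mono f.cokerMap) (hk : Epi f.kerMap) :
    kernel.ι (biprod.desc f.f₀ b) ≫ cokernel.π (biprod.lift a (-f.f₁)) = 0 := by
  haveI := hc
  haveI := hk
  have hsum : (kernel.ι (biprod.desc f.f₀ b) ≫ biprod.fst) ≫ f.f₀ +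
      (kernel.ι (biprod.desc f.f₀ b) ≫ biprod.snd) ≫ b = 0 := by
    rw [Category.assoc, Category.assoc, ← Preadditive.comp_add, ← biprod.desc_eq,
      kernel.condition]
  have hu0 : (kernel.ι (biprod.desc f.f₀ b) ≫ biprod.fst) ≫ cokernel.π a = 0 := by
    rw [← cancel_mono f.cokerMap, Category.assoc, aux_pi_cokerMap, zero_comp,
      ← Category.assoc, eq_neg_of_add_eq_zero_left hsum, Preadditive.neg_comp,
      Category.assoc, cokernel.condition, comp_zero, neg_zero]
  -- first pullback
  let u' : kernel (biprod.desc f.f₀ b) ⟶ Abelian.image a :=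
    kernel.lift (cokernel.π a) (kernel.ι (biprod.desc f.f₀ b) ≫ biprod.fst) hu0
  let p₁ := pullback.fst (Abelian.factorThruImage a) u'
  let p₂ := pullback.snd (Abelian.factorThruImage a) u'
  have hpa : p₁ ≫ a = p₂ ≫ (kernel.ι (biprod.desc f.f₀ b) ≫ biprod.fst) := by
    calc p₁ ≫ a = p₁ ≫ Abelian.factorThruImage a ≫ Abelian.image.ι a := by
          rw [Abelian.image.fac]
    _ = (p₂ ≫ u') ≫ Abelian.image.ι a := by rw [← Category.assoc, pullback.condition]
    _ = p₂ ≫ (kernel.ι (biprod.desc f.f₀ b) ≫ biprod.fst) := by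
          rw [Category.assoc, kernel.lift_ι]
  have hwb : (p₂ ≫ (kernel.ι (biprod.desc f.f₀ b) ≫ biprod.snd) + p₁ ≫ f.f₁) ≫ b = 0 := by
    have e1 : p₁ ≫ f.f₁ ≫ b = p₂ ≫ kernel.ι (biprod.desc f.f₀ b) ≫ biprod.fst ≫ f.f₀ := by
      rw [← f.comm, ← Category.assoc, hpa]
      simp only [Category.assoc]
    simp only [Preadditive.add_comp, Category.assoc]
    rw [e1, ← Preadditive.comp_add]
    have hsum2 : kernel.ι (biprod.desc f.f₀ b) ≫ biprod.snd ≫ b +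
        kernel.ι (biprod.desc f.f₀ b) ≫ biprod.fst ≫ f.f₀ = 0 := by
      rw [add_comm]; simpa only [Category.assoc] using hsum
    rw [hsum2, comp_zero]
  -- second pullback
  let w' : pullback (Abelian.factorThruImage a) u' ⟶ kernel b := kernel.lift b _ hwb
  let q₁ := pullback.fst f.kerMap w'
  let q₂ := pullback.snd f.kerMap w'
  have hq : q₁ ≫ f.kerMap = q₂ ≫ w' := pullback.condition
  have hqw : q₁ ≫ (kernel.ι a ≫ f.f₁) =
      q₂ ≫ (p₂ ≫ (kernel.ι (biprod.desc f.f₀ b) ≫ biprod.snd) + p₁ ≫ f.f₁) := by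
    rw [← aux_kerMap_iota, ← Category.assoc, hq, Category.assoc, kernel.lift_ι]
  have hqw2 : q₁ ≫ kernel.ι a ≫ f.f₁ =
      q₂ ≫ p₂ ≫ kernel.ι (biprod.desc f.f₀ b) ≫ biprod.snd + q₂ ≫ p₁ ≫ f.f₁ := by
    simpa only [Preadditive.comp_add, Category.assoc] using hqw
  have key : (q₂ ≫ p₂) ≫ kernel.ι (biprod.desc f.f₀ b) =
      (q₂ ≫ p₁ - q₁ ≫ kernel.ι a) ≫ biprod.lift a (-f.f₁) := by
    apply biprod.hom_ext
    · simp only [Category.assoc, biprod.lift_fst, Preadditive.sub_comp]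
      rw [hpa, kernel.condition, comp_zero, sub_zero]
    · simp only [Category.assoc, biprod.lift_snd, Preadditive.sub_comp,
        Preadditive.comp_neg]
      rw [hqw2]
      abel
  rw [← cancel_epi (q₂ ≫ p₂), ← Category.assoc, key, comp_zero, Category.assoc,
    cokernel.condition, comp_zero]
/-- Key factorization: if `(f₀, b)` is epi and the cone is exact in the middle, then for
any `c, α'` with `f₁ ≫ c = a ≫ α'` there is a splitting-based `β` with `b ≫ β = c`. -/
theorem aux_claimA (f : ArrowMor a b) [Projective B₀]
    (hd1 : Epi (biprod.desc f.f₀ b))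
    (hE : kernel.ι (biprod.desc f.f₀ b) ≫ cokernel.π (biprod.lift a (-f.f₁)) = 0)
    {K : C} (c : B₁ ⟶ K) (α' : A₀ ⟶ K) (h : f.f₁ ≫ c = a ≫ α') :
    ∃ (s₀ : B₀ ⟶ A₀) (s₁ : B₀ ⟶ B₁), b ≫ (s₀ ≫ α' + s₁ ≫ c) = c := by
  haveI := hd1
  let s : B₀ ⟶ A₀ ⊞ B₁ := Projective.factorThru (𝟙 B₀) (biprod.desc f.f₀ b)
  have hsd : s ≫ biprod.desc f.f₀ b = 𝟙 B₀ := Projective.factorThru_comp _ _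
  refine ⟨s ≫ biprod.fst, s ≫ biprod.snd, ?_⟩
  have ht : (b ≫ s - biprod.inr) ≫ biprod.desc f.f₀ b = 0 := by
    rw [Preadditive.sub_comp, Category.assoc, hsd, Category.comp_id, biprod.inr_desc,
      sub_self]
  have hφ : biprod.lift a (-f.f₁) ≫ biprod.desc α' c = 0 := by
    rw [biprod.lift_desc, Preadditive.neg_comp, h, add_neg_cancel]
  have key : (b ≫ s - biprod.inr) ≫ biprod.desc α' c = 0 := by
    rw [← kernel.lift_ι (biprod.desc f.f₀ b) _ ht,
      ← cokernel.π_desc (biprod.lift a (-f.f₁)) _ hφ, Category.assoc, ← Category.assoc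
      (kernel.ι (biprod.desc f.f₀ b)), hE, zero_comp, comp_zero]
  have key2 : b ≫ s ≫ biprod.desc α' c = c := by
    rw [Preadditive.sub_comp, sub_eq_zero] at key
    rw [← Category.assoc, key, biprod.inr_desc]
  calc b ≫ ((s ≫ biprod.fst) ≫ α' + (s ≫ biprod.snd) ≫ c)
      = b ≫ s ≫ biprod.desc α' c := by
        simp only [biprod.desc_eq, Preadditive.comp_add, Category.assoc]
    _ = c := key2
end Aux


variable {C : Type u} [Category.{v} C] [Abelian C]

/-- Let `𝒜` be abelian with enough projectives and `(f₀,f₁) : a ⟶ b` a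
morphism of `𝒜^[1]` with `A₀`, `B₀` projective.  Then `(f₀,f₁)` is fully cofaithful (for
every `x : X₁ ⟶ X₀` with `X₀` projective, whiskering is bijective on self-homotopies of
morphisms `b ⟶ x` and pre-composition is injective on homotopy classes `b ⟶ x`) iff the
induced morphism `coker a ⟶ coker b` is an isomorphism and `ker a ⟶ ker b` is an
epimorphism. -/
theorem fullyCofaithful_iff [EnoughProjectives C] {A₁ A₀ B₁ B₀ : C}
    (a : A₁ ⟶ A₀) (b : B₁ ⟶ B₀) [Projective A₀] [Projective B₀] (f : ArrowMor a b) :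
    (∀ (X₁ X₀ : C) (x : X₁ ⟶ X₀), Projective X₀ →
      (Function.Bijective
        (fun β : {β : B₀ ⟶ X₁ // b ≫ β = 0 ∧ β ≫ x = 0} =>
          (⟨f.f₀ ≫ β.1,
            by rw [← Category.assoc, f.comm, Category.assoc, β.2.1, comp_zero],
            by rw [Category.assoc, β.2.2, comp_zero]⟩ :
            {γ : A₀ ⟶ X₁ // a ≫ γ = 0 ∧ γ ≫ x = 0})) ∧
       Function.Injective
        (Quot.map (fun u : ArrowMor b x => f.comp u)
          (fun _ _ huv => huv.comp_left f) :
            Quot (Homotopic b x) → Quot (Homotopic a x)))) ↔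
    (IsIso f.cokerMap ∧ Epi f.kerMap) := by
  constructor
  · intro h
    have hiso : IsIso f.cokerMap := by
      obtain ⟨hbij, -⟩ := h (cokernel a) B₀ 0 inferInstance
      obtain ⟨⟨β, hbβ, hun⟩, hβ⟩ := hbij.2 ⟨cokernel.π a, cokernel.condition a, comp_zero⟩
      have hfβ : f.f₀ ≫ β = cokernel.π a := congrArg Subtype.val hβ
      have h1 : f.cokerMap ≫ cokernel.desc b β hbβ = 𝟙 (cokernel a) := by
        rw [← cancel_epi (cokernel.π a), ← Category.assoc, aux_pi_cokerMap,
          Category.assoc, cokernel.π_desc, hfβ, Category.comp_id]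
      obtain ⟨hbij', -⟩ := h (cokernel b) B₀ 0 inferInstance
      have key : f.f₀ ≫ cokernel.π b ≫ cokernel.desc b β hbβ ≫ f.cokerMap
          = f.f₀ ≫ cokernel.π b := by
        rw [← Category.assoc, ← aux_pi_cokerMap, Category.assoc,
          ← Category.assoc f.cokerMap (cokernel.desc b β hbβ) f.cokerMap, h1,
          Category.id_comp, aux_pi_cokerMap]
      have h2' := hbij'.1 (a₁ := ⟨cokernel.π b ≫ cokernel.desc b β hbβ ≫ f.cokerMap,
          by rw [← Category.assoc, cokernel.condition, zero_comp], comp_zero⟩)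
        (a₂ := ⟨cokernel.π b, cokernel.condition b, comp_zero⟩)
        (Subtype.ext key)
      have h2'' : cokernel.π b ≫ cokernel.desc b β hbβ ≫ f.cokerMap = cokernel.π b :=
        congrArg Subtype.val h2'
      have h2 : cokernel.desc b β hbβ ≫ f.cokerMap = 𝟙 (cokernel b) := by
        rw [← cancel_epi (cokernel.π b), h2'', Category.comp_id]
      exact ⟨⟨cokernel.desc b β hbβ, h1, h2⟩⟩
    refine ⟨hiso, ?_⟩
    obtain ⟨-, hinj⟩ := h (cokernel (biprod.lift f.f₁ (-a))) B₀ 0 inferInstance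
    have hrel : f.f₁ ≫ biprod.inl ≫ cokernel.π (biprod.lift f.f₁ (-a))
        = a ≫ biprod.inr ≫ cokernel.π (biprod.lift f.f₁ (-a)) := by
      have hc : (f.f₁ ≫ biprod.inl + (-a) ≫ biprod.inr) ≫
          cokernel.π (biprod.lift f.f₁ (-a)) = 0 := by
        rw [← biprod.lift_eq, cokernel.condition]
      rw [Preadditive.add_comp, Category.assoc, Category.assoc, Preadditive.neg_comp,
        add_neg_eq_zero] at hc
      exact hc
    let u : ArrowMor b (0 : cokernel (biprod.lift f.f₁ (-a)) ⟶ B₀) :=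
      ⟨0, biprod.inl ≫ cokernel.π (biprod.lift f.f₁ (-a)), by simp⟩
    let v : ArrowMor b (0 : cokernel (biprod.lift f.f₁ (-a)) ⟶ B₀) := ⟨0, 0, by simp⟩
    have hfuv : Homotopic a 0 (f.comp u) (f.comp v) := by
      refine ⟨biprod.inr ≫ cokernel.π (biprod.lift f.f₁ (-a)), ?_, ?_⟩
      · show f.f₁ ≫ (biprod.inl ≫ cokernel.π (biprod.lift f.f₁ (-a))) - f.f₁ ≫ 0
            = a ≫ biprod.inr ≫ cokernel.π (biprod.lift f.f₁ (-a))
        rw [comp_zero, sub_zero]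
        exact hrel
      · show f.f₀ ≫ 0 - f.f₀ ≫ 0
            = (biprod.inr ≫ cokernel.π (biprod.lift f.f₁ (-a))) ≫ 0
        simp
    have hmk := hinj (a₁ := Quot.mk _ u) (a₂ := Quot.mk _ v) (Quot.sound hfuv)
    have huv : Homotopic b 0 u v :=
      ((homSetoid b 0).iseqv.eqvGen_iff).mp (Quot.eqvGen_exact hmk)
    obtain ⟨β, hβ₁, -⟩ := huv
    have h' : biprod.inl ≫ cokernel.π (biprod.lift f.f₁ (-a)) - 0 = b ≫ β := hβ₁
    rw [sub_zero] at h'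
    have hj : biprod.lift (kernel.ι b) (0 : kernel b ⟶ A₀) ≫
        cokernel.π (biprod.lift f.f₁ (-a)) = 0 := by
      have e : biprod.lift (kernel.ι b) (0 : kernel b ⟶ A₀) = kernel.ι b ≫ biprod.inl := by
        rw [biprod.lift_eq, zero_comp, add_zero]
      rw [e, Category.assoc, h', ← Category.assoc, kernel.condition, zero_comp]
    let j' : kernel b ⟶ Abelian.image (biprod.lift f.f₁ (-a)) :=
      kernel.lift (cokernel.π (biprod.lift f.f₁ (-a))) _ hj
    let q₁ := pullback.fst (Abelian.factorThruImage (biprod.lift f.f₁ (-a))) j'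
    let q₂ := pullback.snd (Abelian.factorThruImage (biprod.lift f.f₁ (-a))) j'
    have hcond : q₁ ≫ biprod.lift f.f₁ (-a) = q₂ ≫ biprod.lift (kernel.ι b) 0 := by
      calc q₁ ≫ biprod.lift f.f₁ (-a)
          = q₁ ≫ Abelian.factorThruImage (biprod.lift f.f₁ (-a)) ≫
            Abelian.image.ι (biprod.lift f.f₁ (-a)) := by rw [Abelian.image.fac]
        _ = (q₂ ≫ j') ≫ Abelian.image.ι (biprod.lift f.f₁ (-a)) := by
            rw [← Category.assoc, pullback.condition]
        _ = q₂ ≫ biprod.lift (kernel.ι b) 0 := by rw [Category.assoc, kernel.lift_ι]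
    have h1 : q₁ ≫ f.f₁ = q₂ ≫ kernel.ι b := by
      have := congrArg (· ≫ biprod.fst) hcond
      simpa only [Category.assoc, biprod.lift_fst] using this
    have h2 : q₁ ≫ a = 0 := by
      have := congrArg (· ≫ biprod.snd) hcond
      simp only [Category.assoc, biprod.lift_snd, Preadditive.comp_neg, comp_zero] at this
      exact neg_eq_zero.mp this
    have hm : kernel.lift a q₁ h2 ≫ f.kerMap = q₂ := by
      rw [← cancel_mono (kernel.ι b), Category.assoc, aux_kerMap_iota, ← Category.assoc,
        kernel.lift_ι, h1]
    exact epi_of_epi_fac hm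
  · rintro ⟨hiso, hepi⟩
    haveI := hiso
    intro X₁ X₀ x hX₀
    haveI := hX₀
    have hd1 : Epi (biprod.desc f.f₀ b) := aux_d1_epi f inferInstance
    have hE := aux_cone_exact f inferInstance hepi
    refine ⟨⟨?_, ?_⟩, ?_⟩
    · rintro ⟨β₁, hb₁, hx₁⟩ ⟨β₂, hb₂, hx₂⟩ h12
      have h12' : f.f₀ ≫ β₁ = f.f₀ ≫ β₂ := congrArg Subtype.val h12
      have hdesc : cokernel.desc b β₁ hb₁ = cokernel.desc b β₂ hb₂ := by
        rw [← cancel_epi f.cokerMap, ← cancel_epi (cokernel.π a), ← Category.assoc,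
          ← Category.assoc, aux_pi_cokerMap, Category.assoc, Category.assoc,
          cokernel.π_desc, cokernel.π_desc, h12']
      apply Subtype.ext
      show β₁ = β₂
      rw [← cokernel.π_desc b β₁ hb₁, hdesc, cokernel.π_desc]
    · rintro ⟨γ, hγa, hγx⟩
      have hγ'x : cokernel.desc a γ hγa ≫ x = 0 := by
        rw [← cancel_epi (cokernel.π a), ← Category.assoc, cokernel.π_desc, hγx,
          comp_zero]
      refine ⟨⟨cokernel.π b ≫ inv f.cokerMap ≫ cokernel.desc a γ hγa, ?_, ?_⟩, ?_⟩
      · rw [← Category.assoc, cokernel.condition, zero_comp]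
      · simp only [Category.assoc]
        rw [hγ'x, comp_zero, comp_zero]
      · apply Subtype.ext
        show f.f₀ ≫ cokernel.π b ≫ inv f.cokerMap ≫ cokernel.desc a γ hγa = γ
        rw [← Category.assoc, ← aux_pi_cokerMap, Category.assoc, IsIso.hom_inv_id_assoc,
          cokernel.π_desc]
    · intro qu qv hq
      obtain ⟨u, rfl⟩ := Quot.exists_rep qu
      obtain ⟨v, rfl⟩ := Quot.exists_rep qv
      apply Quot.sound
      have hcomp : Homotopic a x (f.comp u) (f.comp v) :=
        ((homSetoid a x).iseqv.eqvGen_iff).mp (Quot.eqvGen_exact hq)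
      obtain ⟨α, hα₁, hα₀⟩ := hcomp
      replace hα₁ : f.f₁ ≫ u.f₁ - f.f₁ ≫ v.f₁ = a ≫ α := hα₁
      replace hα₀ : f.f₀ ≫ u.f₀ - f.f₀ ≫ v.f₀ = α ≫ x := hα₀
      have hα₀' : f.f₀ ≫ (u.f₀ - v.f₀) = α ≫ x := by
        rw [Preadditive.comp_sub]; exact hα₀
      have hw : (u.f₁ - v.f₁) ≫ x = b ≫ (u.f₀ - v.f₀) := by
        rw [Preadditive.sub_comp, Preadditive.comp_sub, ← u.comm, ← v.comm]
      have hbw : b ≫ (u.f₀ - v.f₀) ≫ cokernel.π x = 0 := by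
        rw [← Category.assoc, ← hw, Category.assoc, cokernel.condition, comp_zero]
      have ht0 : f.cokerMap ≫ cokernel.desc b ((u.f₀ - v.f₀) ≫ cokernel.π x) hbw = 0 := by
        rw [← cancel_epi (cokernel.π a), comp_zero, ← Category.assoc, aux_pi_cokerMap,
          Category.assoc, cokernel.π_desc, ← Category.assoc, hα₀', Category.assoc,
          cokernel.condition, comp_zero]
      have htz : cokernel.desc b ((u.f₀ - v.f₀) ≫ cokernel.π x) hbw = 0 := by
        rw [← cancel_epi f.cokerMap, ht0, comp_zero]
      have hw₀π : (u.f₀ - v.f₀) ≫ cokernel.π x = 0 := by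
        rw [← cokernel.π_desc b _ hbw, htz, comp_zero]
      obtain ⟨β', hβ'⟩ : ∃ g : B₀ ⟶ X₁, g ≫ Abelian.factorThruImage x =
          kernel.lift (cokernel.π x) (u.f₀ - v.f₀) hw₀π :=
        ⟨Projective.factorThru _ _, Projective.factorThru_comp _ _⟩
      have hβ'x : β' ≫ x = u.f₀ - v.f₀ := by
        calc β' ≫ x = β' ≫ Abelian.factorThruImage x ≫ Abelian.image.ι x := by
              rw [Abelian.image.fac]
          _ = u.f₀ - v.f₀ := by rw [← Category.assoc, hβ', kernel.lift_ι]
      have hfc : f.f₁ ≫ (u.f₁ - v.f₁ - b ≫ β') = a ≫ (α - f.f₀ ≫ β') := by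
        have h1 : f.f₁ ≫ (u.f₁ - v.f₁) = a ≫ α := by
          rw [Preadditive.comp_sub]; exact hα₁
        rw [Preadditive.comp_sub, h1, Preadditive.comp_sub, ← Category.assoc, ← f.comm,
          Category.assoc]
      have hcx : (u.f₁ - v.f₁ - b ≫ β') ≫ x = 0 := by
        rw [Preadditive.sub_comp, hw, Category.assoc, hβ'x, sub_self]
      have hα'x : (α - f.f₀ ≫ β') ≫ x = 0 := by
        rw [Preadditive.sub_comp, ← hα₀', Category.assoc, hβ'x, sub_self]
      obtain ⟨s₀, s₁, hδ⟩ := aux_claimA f hd1 hE (u.f₁ - v.f₁ - b ≫ β')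
        (α - f.f₀ ≫ β') hfc
      refine ⟨β' + (s₀ ≫ (α - f.f₀ ≫ β') + s₁ ≫ (u.f₁ - v.f₁ - b ≫ β')), ?_, ?_⟩
      · rw [Preadditive.comp_add, hδ]
        abel
      · rw [Preadditive.add_comp, hβ'x, Preadditive.add_comp, Category.assoc,
          Category.assoc, hα'x, hcx, comp_zero, comp_zero, add_zero, add_zero]
end

section
/- Let 𝒜 be an abelian category with enough projectives. Let 𝒟 be the category whose objects are monomorphisms a : A₁ → A₀ of 𝒜 with A₀ projective, and whose morphisms from a to b are homotopy classes of morphisms a → b of the arrow 2-category 𝒜^[1]. Then the functor 𝒟 → 𝒜 sending a to coker a (and a homotopy class of (f₀,f₁) to the induced morphism coker a → coker b) is an equivalence of categories. -/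
open CategoryTheory CategoryTheory.Limits

universe v u

namespace ArrowMor

variable {C : Type u} [Category.{v} C] {A₁ A₀ B₁ B₀ D₁ D₀ E₁ E₀ : C}
  {a : A₁ ⟶ A₀} {b : B₁ ⟶ B₀} {d : D₁ ⟶ D₀} {e : E₁ ⟶ E₀}

theorem id_comp' (f : ArrowMor a b) : (ArrowMor.id a).comp f = f :=
  ext' (by simp [comp, id]) (by simp [comp, id])

theorem comp_id' (f : ArrowMor a b) : f.comp (ArrowMor.id b) = f :=
  ext' (by simp [comp, id]) (by simp [comp, id])

theorem comp_assoc' (f : ArrowMor a b) (g : ArrowMor b d) (h : ArrowMor d e) :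
    (f.comp g).comp h = f.comp (g.comp h) :=
  ext' (by simp [comp]) (by simp [comp])

end ArrowMor

variable (C : Type u) [Category.{v} C] [Abelian C]

/-- The objects of the category `𝒟`: monomorphisms `a : A₁ ⟶ A₀` of `𝒜`
with `A₀` projective (the discrete objects of `𝒜^[1]_c`). -/
structure DiscObj where
  A₁ : C
  A₀ : C
  a : A₁ ⟶ A₀
  mono : Mono a
  proj : Projective A₀

variable {C}

/-- The category `𝒟`: morphisms are homotopy classes of morphisms of arrows. -/
instance : Category (DiscObj C) where
  Hom X Y := Quot (Homotopic X.a Y.a)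
  id X := Quot.mk _ (ArrowMor.id X.a)
  comp {X Y Z} f g :=
    Quot.map₂ ArrowMor.comp (fun f _ _ h => h.comp_left f) (fun _ _ g h => h.comp_right g) f g
  id_comp f := by
    induction f using Quot.ind
    exact congrArg (Quot.mk _) (ArrowMor.id_comp' _)
  comp_id f := by
    induction f using Quot.ind
    exact congrArg (Quot.mk _) (ArrowMor.comp_id' _)
  assoc f g h := by
    induction f using Quot.ind
    induction g using Quot.ind
    induction h using Quot.ind
    exact congrArg (Quot.mk _) (ArrowMor.comp_assoc' _ _ _)

theorem cokerMap_congr {A₁ A₀ B₁ B₀ : C} {a : A₁ ⟶ A₀} {b : B₁ ⟶ B₀}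
    {f g : ArrowMor a b} (h : Homotopic a b f g) : f.cokerMap = g.cokerMap := by
  obtain ⟨α, h₁, h₀⟩ := h
  rw [← cancel_epi (cokernel.π a)]
  simp only [ArrowMor.cokerMap, cokernel.π_desc]
  rw [← sub_eq_zero, ← Preadditive.sub_comp, h₀, Category.assoc, cokernel.condition,
    comp_zero]

/-- The functor `𝒟 ⥤ 𝒜` sending `a` to `coker a` and the homotopy class of `(f₀,f₁)`
to the induced morphism `coker a ⟶ coker b`. -/
noncomputable def discCokernelFunctor : DiscObj C ⥤ C where
  obj X := cokernel X.a
  map {X Y} f := Quot.lift ArrowMor.cokerMap (fun _ _ h => cokerMap_congr h) f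
  map_id X := by
    show (ArrowMor.id X.a).cokerMap = 𝟙 _
    refine coequalizer.hom_ext ?_
    simp [ArrowMor.id, ArrowMor.cokerMap]
  map_comp {X Y Z} f g := by
    obtain ⟨f⟩ := f
    obtain ⟨g⟩ := g
    show (f.comp g).cokerMap = f.cokerMap ≫ g.cokerMap
    refine coequalizer.hom_ext ?_
    simp [ArrowMor.comp, ArrowMor.cokerMap]

/-- For an abelian category `𝒜` with enough projectives, the functor
`𝒟 ⥤ 𝒜`, `a ↦ coker a`, from the category of monomorphisms with projective codomain
and homotopy classes of morphisms of arrows, is an equivalence of categories. -/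
theorem discCokernelFunctor_isEquivalence [EnoughProjectives C] :
    (discCokernelFunctor (C := C)).IsEquivalence := by
  have full : (discCokernelFunctor (C := C)).Full := by
    constructor
    intro X Y φ
    change cokernel X.a ⟶ cokernel Y.a at φ
    haveI := X.proj
    haveI := Y.mono
    let f₀ : X.A₀ ⟶ Y.A₀ := Projective.factorThru (cokernel.π X.a ≫ φ) (cokernel.π Y.a)
    have hf₀ : f₀ ≫ cokernel.π Y.a = cokernel.π X.a ≫ φ :=
      Projective.factorThru_comp _ _
    have hz : (X.a ≫ f₀) ≫ cokernel.π Y.a = 0 := by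
      rw [Category.assoc, hf₀, ← Category.assoc, cokernel.condition, zero_comp]
    let f₁ : X.A₁ ⟶ Y.A₁ := Abelian.monoLift Y.a (X.a ≫ f₀) hz
    have comm : X.a ≫ f₀ = f₁ ≫ Y.a := (Abelian.monoLift_comp Y.a _ hz).symm
    refine ⟨Quot.mk _ ⟨f₀, f₁, comm⟩, ?_⟩
    show ArrowMor.cokerMap _ = φ
    refine coequalizer.hom_ext ?_
    simpa [ArrowMor.cokerMap] using hf₀
  have faithful : (discCokernelFunctor (C := C)).Faithful := by
    constructor
    intro X Y f g h
    induction f using Quot.ind with | _ f => ?_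
    induction g using Quot.ind with | _ g => ?_
    haveI := Y.mono
    have h' : f.cokerMap = g.cokerMap := h
    have hz : (f.f₀ - g.f₀) ≫ cokernel.π Y.a = 0 := by
      rw [Preadditive.sub_comp, ← cokernel.π_desc X.a (f.f₀ ≫ cokernel.π Y.a),
        ← cokernel.π_desc X.a (g.f₀ ≫ cokernel.π Y.a)]
      show cokernel.π X.a ≫ f.cokerMap - cokernel.π X.a ≫ g.cokerMap = 0
      rw [h', sub_self]
    let α : X.A₀ ⟶ Y.A₁ := Abelian.monoLift Y.a (f.f₀ - g.f₀) hz
    have hα : α ≫ Y.a = f.f₀ - g.f₀ := Abelian.monoLift_comp Y.a _ hz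
    refine Quot.sound ⟨α, ?_, hα.symm⟩
    rw [← cancel_mono Y.a, Preadditive.sub_comp, ← f.comm, ← g.comm, Category.assoc, hα,
      Preadditive.comp_sub]
  have essSurj : (discCokernelFunctor (C := C)).EssSurj := by
    constructor
    intro X
    let P := Projective.over X
    let π : P ⟶ X := Projective.π X
    refine ⟨⟨kernel π, P, kernel.ι π, inferInstance, inferInstance⟩, ⟨?_⟩⟩
    exact IsColimit.coconePointUniqueUpToIso (colimit.isColimit _)
      (Abelian.epiIsCokernelOfKernel _ (kernelIsKernel π))
  exact { full := full, faithful := faithful, essSurj := essSurj }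
end

section
/- Let 𝒜 be an abelian category with enough projectives. Let 𝒞 be the category whose objects are epimorphisms a : A₁ → A₀ of 𝒜 with A₀ projective, and whose morphisms from a to b are homotopy classes of morphisms a → b of the arrow 2-category 𝒜^[1]. Then the functor 𝒞 → 𝒜 sending a to ker a (and a homotopy class of (f₀,f₁) to the induced morphism ker a → ker b) is an equivalence of categories. -/
open CategoryTheory CategoryTheory.Limits

universe v u

variable (C : Type u) [Category.{v} C] [Abelian C]

/-- The objects of the category `𝒞`: epimorphisms `a : A₁ ⟶ A₀` of `𝒜`
with `A₀` projective (the codiscrete objects of `𝒜^[1]_c`). -/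
structure CodiscObj where
  A₁ : C
  A₀ : C
  a : A₁ ⟶ A₀
  epi : Epi a
  proj : Projective A₀

variable {C}

/-- The category `𝒞`: morphisms are homotopy classes of morphisms of arrows. -/
instance : Category (CodiscObj C) where
  Hom X Y := Quot (Homotopic X.a Y.a)
  id X := Quot.mk _ (ArrowMor.id X.a)
  comp {X Y Z} f g :=
    Quot.map₂ ArrowMor.comp (fun f _ _ h => h.comp_left f) (fun _ _ g h => h.comp_right g) f g
  id_comp f := by
    induction f using Quot.ind
    exact congrArg (Quot.mk _) (ArrowMor.id_comp' _)
  comp_id f := by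
    induction f using Quot.ind
    exact congrArg (Quot.mk _) (ArrowMor.comp_id' _)
  assoc f g h := by
    induction f using Quot.ind
    induction g using Quot.ind
    induction h using Quot.ind
    exact congrArg (Quot.mk _) (ArrowMor.comp_assoc' _ _ _)

theorem kerMap_congr {A₁ A₀ B₁ B₀ : C} {a : A₁ ⟶ A₀} {b : B₁ ⟶ B₀}
    {f g : ArrowMor a b} (h : Homotopic a b f g) : f.kerMap = g.kerMap := by
  obtain ⟨α, h₁, h₀⟩ := h
  rw [← cancel_mono (kernel.ι b)]
  simp only [ArrowMor.kerMap, kernel.lift_ι]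
  rw [← sub_eq_zero, ← Preadditive.comp_sub, h₁, ← Category.assoc, kernel.condition,
    zero_comp]

/-- The functor `𝒞 ⥤ 𝒜` sending `a` to `ker a` and the homotopy class of `(f₀,f₁)`
to the induced morphism `ker a ⟶ ker b`. -/
noncomputable def codiscKernelFunctor : CodiscObj C ⥤ C where
  obj X := kernel X.a
  map {X Y} f := Quot.lift ArrowMor.kerMap (fun _ _ h => kerMap_congr h) f
  map_id X := by
    show (ArrowMor.id X.a).kerMap = 𝟙 _
    refine equalizer.hom_ext ?_
    simp [ArrowMor.id, ArrowMor.kerMap]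
  map_comp {X Y Z} f g := by
    obtain ⟨f⟩ := f
    obtain ⟨g⟩ := g
    show (f.comp g).kerMap = f.kerMap ≫ g.kerMap
    refine equalizer.hom_ext ?_
    simp [ArrowMor.comp, ArrowMor.kerMap]

/-- For an abelian category `𝒜` with enough projectives, the functor
`𝒞 ⥤ 𝒜`, `a ↦ ker a`, from the category of epimorphisms with projective codomain
and homotopy classes of morphisms of arrows, is an equivalence of categories. -/
theorem codiscKernelFunctor_isEquivalence [EnoughProjectives C] :
    (codiscKernelFunctor (C := C)).IsEquivalence := by
  have full : (codiscKernelFunctor (C := C)).Full := by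
    constructor
    intro X Y φ
    haveI := X.epi; haveI := X.proj; haveI := Y.epi
    set s : X.A₀ ⟶ X.A₁ := Projective.factorThru (𝟙 X.A₀) X.a with hs_def
    have hs : s ≫ X.a = 𝟙 X.A₀ := Projective.factorThru_comp _ _
    have hr : (𝟙 X.A₁ - X.a ≫ s) ≫ X.a = 0 := by
      simp [Preadditive.sub_comp, Category.assoc, hs]
    set r : X.A₁ ⟶ kernel X.a := kernel.lift X.a (𝟙 X.A₁ - X.a ≫ s) hr with hr_def
    have hir : kernel.ι X.a ≫ r = 𝟙 (kernel X.a) := by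
      rw [← cancel_mono (kernel.ι X.a)]
      simp [hr_def, Preadditive.comp_sub, kernel.condition_assoc]
    refine ⟨Quot.mk _ ⟨0, r ≫ φ ≫ kernel.ι Y.a, by
      exact comp_zero.trans ((Category.assoc _ _ _).trans ((congrArg (fun t => r ≫ t)
        ((Category.assoc _ _ _).trans ((congrArg (fun t => φ ≫ t) (kernel.condition Y.a)).trans
          comp_zero))).trans comp_zero)).symm⟩, ?_⟩
    show ArrowMor.kerMap _ = φ
    refine equalizer.hom_ext ?_
    simp [ArrowMor.kerMap, reassoc_of% hir]
    rfl
  have faithful : (codiscKernelFunctor (C := C)).Faithful := by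
    constructor
    intro X Y f g h
    haveI := X.epi; haveI := Y.epi
    induction f using Quot.ind with | _ f =>
    induction g using Quot.ind with | _ g =>
    have h' : f.kerMap = g.kerMap := h
    have hk : kernel.ι X.a ≫ (f.f₁ - g.f₁) = 0 := by
      have := congrArg (· ≫ kernel.ι Y.a) h'
      simp only [ArrowMor.kerMap, kernel.lift_ι] at this
      rw [Preadditive.comp_sub, this, sub_self]
    refine Quot.sound ⟨Abelian.epiDesc X.a (f.f₁ - g.f₁) hk, ?_, ?_⟩
    · exact (Abelian.comp_epiDesc X.a _ hk).symm
    · rw [← cancel_epi X.a, ← Category.assoc, Abelian.comp_epiDesc,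
        Preadditive.comp_sub, f.comm, g.comm, Preadditive.sub_comp]
  have essSurj : (codiscKernelFunctor (C := C)).EssSurj := by
    constructor
    intro Y
    open ZeroObject in
    have hz : IsZero (0 : C) := isZero_zero C
    have hepi : Epi (0 : Y ⟶ (0 : C)) := ⟨fun g h _ => hz.eq_of_src g h⟩
    have hproj : Projective (0 : C) := ⟨fun f e _ => ⟨0, hz.eq_of_src _ _⟩⟩
    exact ⟨⟨Y, 0, 0, hepi, hproj⟩, ⟨kernelZeroIsoSource⟩⟩
  exact { full := full, faithful := faithful, essSurj := essSurj }
end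

section
/- Let 𝒜 be an abelian category, let x : X₁ → X₀ be a morphism of 𝒜, let ε₀ : P₀ → X₀ be an epimorphism, and form the pullback square with P₁ = P₀ ×_{X₀} X₁, projections p : P₁ → P₀ and ε₁ : P₁ → X₁. Then the morphism (ε₀, ε₁) : p → x of the arrow category induces an isomorphism ker p → ker x and an isomorphism coker p → coker x. -/
open CategoryTheory CategoryTheory.Limits
open scoped Pseudoelement
attribute [local instance] CategoryTheory.Abelian.Pseudoelement.objectToSort CategoryTheory.Abelian.Pseudoelement.homToFun

universe v u

variable {C : Type u} [Category.{v} C] [Abelian C]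

/-- Let `𝒜` be abelian, `x : X₁ ⟶ X₀`, `ε₀ : P₀ ⟶ X₀` an epimorphism,
and form the pullback `P₁ = P₀ ×_{X₀} X₁` with projections `p : P₁ ⟶ P₀` and
`ε₁ : P₁ ⟶ X₁`.  Then `(ε₀, ε₁) : p ⟶ x` induces an isomorphism `ker p ⟶ ker x`
and an isomorphism `coker p ⟶ coker x`. -/
theorem replacement_kerMap_cokerMap_isIso {X₁ X₀ P₀ : C}
    (x : X₁ ⟶ X₀) (ε₀ : P₀ ⟶ X₀) [Epi ε₀] :
    IsIso (kernel.map (pullback.fst ε₀ x) x (pullback.snd ε₀ x) ε₀ pullback.condition) ∧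
    IsIso (cokernel.map (pullback.fst ε₀ x) x (pullback.snd ε₀ x) ε₀ pullback.condition) := by
  constructor
  · refine ⟨⟨kernel.lift _ (pullback.lift 0 (kernel.ι x) (by simp)) (by erw [pullback.lift_fst]), ?_, ?_⟩⟩
    · rw [← cancel_mono (kernel.ι (pullback.fst ε₀ x))]
      simp only [Category.assoc, kernel.lift_ι, Category.id_comp]
      apply pullback.hom_ext
      · rw [Category.assoc]; erw [pullback.lift_fst]; simp
      · rw [Category.assoc]; erw [pullback.lift_snd]; simp
    · rw [← cancel_mono (kernel.ι x)]
      simp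
      erw [pullback.lift_snd]
  · apply (config := { allowSynthFailures := true }) isIso_of_mono_of_epi
    · apply Abelian.Pseudoelement.mono_of_zero_of_map_zero
      intro a ha
      obtain ⟨a', rfl⟩ := Abelian.Pseudoelement.pseudo_surjective_of_epi (cokernel.π (pullback.fst ε₀ x)) a
      have h1 : cokernel.π x (ε₀ a') = 0 := by
        have heq : ε₀ ≫ cokernel.π x = cokernel.π (pullback.fst ε₀ x) ≫
            cokernel.map (pullback.fst ε₀ x) x (pullback.snd ε₀ x) ε₀ pullback.condition :=
          (cokernel.π_desc _ _ _).symm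
        rw [← Abelian.Pseudoelement.comp_apply, heq, Abelian.Pseudoelement.comp_apply]
        exact ha
      have hex : (ShortComplex.mk x (cokernel.π x) (by simp)).Exact :=
        ShortComplex.exact_of_g_is_cokernel _ (cokernelIsCokernel x)
      obtain ⟨b, hb⟩ := Abelian.Pseudoelement.pseudo_exact_of_exact hex _ h1
      obtain ⟨s, hs1, _⟩ := Abelian.Pseudoelement.pseudo_pullback (p := a') (q := b)
        (f := ε₀) (g := x) (by rw [hb])
      rw [← hs1, ← Abelian.Pseudoelement.comp_apply, cokernel.condition,
        Abelian.Pseudoelement.zero_apply]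
end

section
/- Let 𝒜 be an abelian category, let a : A₁ → A₀ with A₀ projective, let x : X₁ → X₀, and let (f₀,f₁) : a → x be a morphism of arrows inducing isomorphisms ker a → ker x and coker a → coker x. Let ε₀ : P₀ → X₀ be an epimorphism and let p : P₁ → P₀ be the pullback of x along ε₀, with ε₁ : P₁ → X₁ the other projection. Then there exists a morphism of arrows (g₀,g₁) : a → p with ε₀ ∘ g₀ = f₀ and ε₁ ∘ g₁ = f₁; moreover, for any two such lifts (g₀,g₁) and (g'₀,g'₁) there is a unique homotopy α : A₀ → P₁ from (g₀,g₁) to (g'₀,g'₁) satisfying ε₁ ∘ α = 0. -/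
open CategoryTheory CategoryTheory.Limits

universe v u

variable {C : Type u} [Category.{v} C] [Abelian C]

/-- Let `𝒜` be abelian, `a : A₁ ⟶ A₀` with `A₀` projective,
`x : X₁ ⟶ X₀`, and `(f₀,f₁) : a ⟶ x` a morphism of arrows inducing isomorphisms on
kernels and cokernels.  Let `ε₀ : P₀ ⟶ X₀` be an epimorphism and `p : P₁ ⟶ P₀` the
pullback of `x` along `ε₀`, with other projection `ε₁ : P₁ ⟶ X₁`.  Then `(f₀,f₁)` lifts
to a morphism `(g₀,g₁) : a ⟶ p`, and any two such lifts are related by a unique homotopy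
`α` with `ε₁ ∘ α = 0`. -/
theorem replacement_lift_exists_unique {A₁ A₀ X₁ X₀ P₀ : C}
    (a : A₁ ⟶ A₀) [Projective A₀] (x : X₁ ⟶ X₀) (f : ArrowMor a x)
    (hker : IsIso f.kerMap) (hcoker : IsIso f.cokerMap)
    (ε₀ : P₀ ⟶ X₀) [Epi ε₀] :
    (∃ g : ArrowMor a (pullback.fst ε₀ x),
      g.f₀ ≫ ε₀ = f.f₀ ∧ g.f₁ ≫ pullback.snd ε₀ x = f.f₁) ∧
    (∀ g g' : ArrowMor a (pullback.fst ε₀ x),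
      (g.f₀ ≫ ε₀ = f.f₀ ∧ g.f₁ ≫ pullback.snd ε₀ x = f.f₁) →
      (g'.f₀ ≫ ε₀ = f.f₀ ∧ g'.f₁ ≫ pullback.snd ε₀ x = f.f₁) →
      ∃! α : A₀ ⟶ pullback ε₀ x,
        IsHomotopy g g' α ∧ α ≫ pullback.snd ε₀ x = 0) := by
  constructor
  · obtain ⟨g₀, hg₀⟩ := Projective.factors f.f₀ ε₀
    exact ⟨⟨g₀, pullback.lift (a ≫ g₀) f.f₁ (by rw [Category.assoc, hg₀, f.comm]),
      by rw [pullback.lift_fst]⟩, hg₀, by rw [pullback.lift_snd]⟩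
  · rintro g g' ⟨hg₀, hg₁⟩ ⟨hg'₀, hg'₁⟩
    have h0 : (g.f₀ - g'.f₀) ≫ ε₀ = 0 := by
      rw [Preadditive.sub_comp, hg₀, hg'₀, sub_self]
    refine ⟨pullback.lift (g.f₀ - g'.f₀) 0 (by simp [h0]), ⟨⟨?_, by rw [pullback.lift_fst]⟩, by rw [pullback.lift_snd]⟩, ?_⟩
    · apply pullback.hom_ext
      · rw [Preadditive.sub_comp, ← g.comm, ← g'.comm, Category.assoc,
          pullback.lift_fst, Preadditive.comp_sub]
      · simp [Preadditive.sub_comp, hg₁, hg'₁]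
        rw [pullback.lift_snd, comp_zero]
    · rintro α ⟨⟨-, h0'⟩, h2⟩
      apply pullback.hom_ext
      · simp [← h0']
        rw [pullback.lift_fst]
      · simp [h2]
        rw [pullback.lift_snd]
end

section
/- Let 𝒜 be an abelian category and let (f₀,f₁) : a → b be a morphism of arrows, with a : A₁ → A₀ and b : B₁ → B₀. Let Q be the pushout of f₁ : A₁ → B₁ along a : A₁ → A₀, with structure maps q : B₁ → Q and ξ : A₀ → Q, and let q' : Q → B₀ be the morphism induced by b : B₁ → B₀ and f₀ : A₀ → B₀. Then (id_{B₀}, q) : b → q' is a morphism of arrows, ξ is a homotopy from the composite (id_{B₀}, q) ∘ (f₀, f₁) to the zero morphism a → q', and for every arrow c : C₁ → C₀, every morphism (u₀,u₁) : b → c and every homotopy φ : A₀ → C₁ from (u₀,u₁) ∘ (f₀,f₁) to zero, there exists a unique morphism v₁ : Q → C₁ with v₁ ∘ q = u₁ and v₁ ∘ ξ = φ, and (u₀, v₁) : q' → c is a morphism of arrows with (u₀, v₁) ∘ (id_{B₀}, q) = (u₀, u₁). -/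
open CategoryTheory CategoryTheory.Limits

universe v u

variable {C : Type u} [Category.{v} C] [Abelian C]

/-- the 2-cokernel in `𝒜^[1]`.  Let `(f₀,f₁) : a ⟶ b` be a morphism of
arrows, `Q` the pushout of `f₁` along `a` with structure maps `q = inr : B₁ ⟶ Q` and
`ξ = inl : A₀ ⟶ Q`, and `q' : Q ⟶ B₀` induced by `b` and `f₀`.  Then `(𝟙_{B₀}, q) : b ⟶ q'`
is a morphism of arrows, `ξ` is a homotopy from `(𝟙,q) ∘ (f₀,f₁)` to zero, and for every
arrow `c`, morphism `(u₀,u₁) : b ⟶ c` and homotopy `φ` from `(u₀,u₁) ∘ (f₀,f₁)` to zero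
there is a unique `v₁ : Q ⟶ C₁` with `v₁ ∘ q = u₁` and `v₁ ∘ ξ = φ`; moreover `(u₀,v₁)`
is a morphism of arrows `q' ⟶ c` with `(u₀,v₁) ∘ (𝟙,q) = (u₀,u₁)`. -/
theorem twoCokernel_spec {A₁ A₀ B₁ B₀ : C} (a : A₁ ⟶ A₀) (b : B₁ ⟶ B₀)
    (f : ArrowMor a b) :
    (b ≫ 𝟙 B₀ = pushout.inr a f.f₁ ≫ pushout.desc f.f₀ b f.comm) ∧
    IsHomotopy
      (f.comp (⟨𝟙 B₀, pushout.inr a f.f₁, by rw [Category.comp_id]; exact (pushout.inr_desc ..).symm⟩ :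
        ArrowMor b (pushout.desc f.f₀ b f.comm)))
      (⟨0, 0, by simp⟩ : ArrowMor a (pushout.desc f.f₀ b f.comm))
      (pushout.inl a f.f₁) ∧
    ∀ (C₁ C₀ : C) (c : C₁ ⟶ C₀) (u : ArrowMor b c) (φ : A₀ ⟶ C₁),
      IsHomotopy (f.comp u) (⟨0, 0, by simp⟩ : ArrowMor a c) φ →
      (∃! v₁ : pushout a f.f₁ ⟶ C₁,
        pushout.inr a f.f₁ ≫ v₁ = u.f₁ ∧ pushout.inl a f.f₁ ≫ v₁ = φ) ∧
      ∀ v₁ : pushout a f.f₁ ⟶ C₁,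
        (pushout.inr a f.f₁ ≫ v₁ = u.f₁ ∧ pushout.inl a f.f₁ ≫ v₁ = φ) →
        ∃ hcomm : pushout.desc f.f₀ b f.comm ≫ u.f₀ = v₁ ≫ c,
          ArrowMor.comp
            (⟨𝟙 B₀, pushout.inr a f.f₁, by rw [Category.comp_id]; exact (pushout.inr_desc ..).symm⟩ :
              ArrowMor b (pushout.desc f.f₀ b f.comm))
            (⟨u.f₀, v₁, hcomm⟩ : ArrowMor (pushout.desc f.f₀ b f.comm) c) = u := by
  refine ⟨by rw [Category.comp_id]; exact (pushout.inr_desc ..).symm, ⟨?_, ?_⟩, ?_⟩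
  · simp [ArrowMor.comp, f.comm, pushout.condition]
  · simp [ArrowMor.comp]; exact (pushout.inl_desc ..).symm
  · intro C₁ C₀ c u φ hφ
    obtain ⟨h₁, h₀⟩ := hφ
    simp only [ArrowMor.comp, sub_zero] at h₁ h₀
    constructor
    · refine ⟨pushout.desc φ u.f₁ h₁.symm, ⟨pushout.inr_desc .., pushout.inl_desc ..⟩, ?_⟩
      intro v ⟨hv₁, hv₂⟩
      apply pushout.hom_ext
      · rw [hv₂]; exact (pushout.inl_desc ..).symm
      · rw [hv₁]; exact (pushout.inr_desc ..).symm
    · intro v₁ ⟨hv₁, hv₂⟩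
      have hcomm : pushout.desc f.f₀ b f.comm ≫ u.f₀ = v₁ ≫ c := by
        apply pushout.hom_ext
        · rw [← Category.assoc, pushout.inl_desc, ← Category.assoc, hv₂, h₀]
        · rw [← Category.assoc, pushout.inr_desc, ← Category.assoc, hv₁, u.comm]
      exact ⟨hcomm, ArrowMor.ext' (by simp [ArrowMor.comp]) (by simp [ArrowMor.comp, hv₁])⟩
end

section
/- Let 𝒜 be an abelian category and let (f₀,f₁) : a → b be a morphism of arrows, with a : A₁ → A₀ and b : B₁ → B₀. Let K be the pullback of b : B₁ → B₀ along f₀ : A₀ → B₀, with projections k : K → A₀ and κ : K → B₁, and let k' : A₁ → K be the morphism determined by k ∘ k' = a and κ ∘ k' = f₁. Then (k, id_{A₁}) : k' → a is a morphism of arrows, κ is a homotopy from the composite (f₀,f₁) ∘ (k, id_{A₁}) to the zero morphism k' → b, and for every arrow x : X₁ → X₀, every morphism (u₀,u₁) : x → a and every homotopy φ : X₀ → B₁ from (f₀,f₁) ∘ (u₀,u₁) to zero, there exists a unique morphism v₀ : X₀ → K with k ∘ v₀ = u₀ and κ ∘ v₀ = φ, and (v₀, u₁) : x → k' is a morphism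 of arrows with (k, id_{A₁}) ∘ (v₀, u₁) = (u₀, u₁). -/
open CategoryTheory CategoryTheory.Limits

universe v u

variable {C : Type u} [Category.{v} C] [Abelian C]

/-- the 2-kernel in `𝒜^[1]`.  Let `(f₀,f₁) : a ⟶ b` be a morphism of
arrows, `K` the pullback of `b` along `f₀` with projections `k = fst : K ⟶ A₀` and
`κ = snd : K ⟶ B₁`, and `k' : A₁ ⟶ K` determined by `k ∘ k' = a`, `κ ∘ k' = f₁`.  Then
`(k, 𝟙_{A₁}) : k' ⟶ a` is a morphism of arrows, `κ` is a homotopy from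
`(f₀,f₁) ∘ (k,𝟙)` to zero, and for every arrow `x`, morphism `(u₀,u₁) : x ⟶ a` and
homotopy `φ` from `(f₀,f₁) ∘ (u₀,u₁)` to zero there is a unique `v₀ : X₀ ⟶ K` with
`k ∘ v₀ = u₀` and `κ ∘ v₀ = φ`; moreover `(v₀,u₁)` is a morphism of arrows `x ⟶ k'`
with `(k,𝟙) ∘ (v₀,u₁) = (u₀,u₁)`. -/
theorem twoKernel_spec {A₁ A₀ B₁ B₀ : C} (a : A₁ ⟶ A₀) (b : B₁ ⟶ B₀)
    (f : ArrowMor a b) :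
    (pullback.lift a f.f₁ f.comm ≫ pullback.fst f.f₀ b = 𝟙 A₁ ≫ a) ∧
    IsHomotopy
      (ArrowMor.comp
        (⟨pullback.fst f.f₀ b, 𝟙 A₁, by rw [Category.id_comp]; exact pullback.lift_fst _ _ _⟩ :
          ArrowMor (pullback.lift a f.f₁ f.comm) a) f)
      (⟨0, 0, by simp⟩ : ArrowMor (pullback.lift a f.f₁ f.comm) b)
      (pullback.snd f.f₀ b) ∧
    ∀ (X₁ X₀ : C) (x : X₁ ⟶ X₀) (u : ArrowMor x a) (φ : X₀ ⟶ B₁),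
      IsHomotopy (u.comp f) (⟨0, 0, by simp⟩ : ArrowMor x b) φ →
      (∃! v₀ : X₀ ⟶ pullback f.f₀ b,
        v₀ ≫ pullback.fst f.f₀ b = u.f₀ ∧ v₀ ≫ pullback.snd f.f₀ b = φ) ∧
      ∀ v₀ : X₀ ⟶ pullback f.f₀ b,
        (v₀ ≫ pullback.fst f.f₀ b = u.f₀ ∧ v₀ ≫ pullback.snd f.f₀ b = φ) →
        ∃ hcomm : x ≫ v₀ = u.f₁ ≫ pullback.lift a f.f₁ f.comm,
          ArrowMor.comp (⟨v₀, u.f₁, hcomm⟩ : ArrowMor x (pullback.lift a f.f₁ f.comm))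
            (⟨pullback.fst f.f₀ b, 𝟙 A₁, by rw [Category.id_comp]; exact pullback.lift_fst _ _ _⟩ :
              ArrowMor (pullback.lift a f.f₁ f.comm) a) = u := by
  refine ⟨by rw [Category.id_comp]; exact pullback.lift_fst _ _ _, ⟨by simp [ArrowMor.comp]; exact (pullback.lift_snd _ _ _).symm, by simp [ArrowMor.comp, pullback.condition]⟩,
    fun X₁ X₀ x u φ hφ => ?_⟩
  obtain ⟨h₁, h₀⟩ := hφ
  simp only [ArrowMor.comp, sub_zero] at h₁ h₀
  constructor
  · refine ⟨pullback.lift u.f₀ φ h₀, ⟨pullback.lift_fst _ _ _, pullback.lift_snd _ _ _⟩, ?_⟩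
    rintro w ⟨hw₁, hw₂⟩
    apply pullback.hom_ext <;> simp [hw₁, hw₂, pullback.lift_fst, pullback.lift_snd]
  · rintro v₀ ⟨hv₁, hv₂⟩
    have hcomm : x ≫ v₀ = u.f₁ ≫ pullback.lift a f.f₁ f.comm := by
      apply pullback.hom_ext
      · simp [hv₁, u.comm]; rw [pullback.lift_fst]
      · simp [hv₂, ← h₁]; rw [pullback.lift_snd]
    exact ⟨hcomm, ArrowMor.ext' (by simp [ArrowMor.comp, hv₁]) (by simp [ArrowMor.comp])⟩
end

section
/- Let 𝒜 be an abelian category and let a : A₁ → A₀ and b : B₁ → B₀ be morphisms of 𝒜 such that A₁ and B₁ are injective objects. If (f₀,f₁) : a → b is a morphism of arrows such that the induced morphisms ker a → ker b and coker a → coker b are isomorphisms, then (f₀,f₁) is a homotopy equivalence: there exists a morphism of arrows (g₀,g₁) : b → a such that (g₀,g₁) ∘ (f₀,f₁) is homotopic to the identity of a and (f₀,f₁) ∘ (g₀,g₁) is homotopic to the identity of b. -/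
open CategoryTheory CategoryTheory.Limits

universe v u

variable {C : Type u} [Category.{v} C] [Abelian C]

/-- dual of Statement 4.  Let `𝒜` be abelian and `a : A₁ ⟶ A₀`,
`b : B₁ ⟶ B₀` morphisms of `𝒜` with `A₁` and `B₁` injective.  Any morphism of arrows
`(f₀,f₁) : a ⟶ b` inducing isomorphisms on kernels and cokernels is a homotopy
equivalence. -/
theorem homotopyEquiv_of_isIso_kerMap_cokerMap_injective {A₁ A₀ B₁ B₀ : C}
    (a : A₁ ⟶ A₀) (b : B₁ ⟶ B₀) [Injective A₁] [Injective B₁]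
    (f : ArrowMor a b) (hker : IsIso f.kerMap) (hcoker : IsIso f.cokerMap) :
    ∃ g : ArrowMor b a,
      Homotopic a a (f.comp g) (ArrowMor.id a) ∧
      Homotopic b b (g.comp f) (ArrowMor.id b) := by
  haveI := hker
  haveI := hcoker
  -- The mapping cone short complex `A₁ ⟶ A₀ ⊞ B₁ ⟶ B₀`.
  set u : A₁ ⟶ A₀ ⊞ B₁ := biprod.lift a f.f₁ with hu
  set v : A₀ ⊞ B₁ ⟶ B₀ := biprod.desc f.f₀ (-b) with hv
  have huv : u ≫ v = 0 := by
    simp [hu, hv, f.comm]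
  set S : ShortComplex C := ShortComplex.mk u v huv with hS
  -- `u` is mono.
  have hmono : Mono u := by
    apply Preadditive.mono_of_cancel_zero
    intro P w hw
    have hwa : w ≫ a = 0 := by
      have := hw =≫ biprod.fst; simpa [hu] using this
    have hwf : w ≫ f.f₁ = 0 := by
      have := hw =≫ biprod.snd; simpa [hu] using this
    have hfac : kernel.lift a w hwa ≫ kernel.ι a = w := kernel.lift_ι a w hwa
    have h2 : kernel.lift a w hwa ≫ f.kerMap ≫ kernel.ι b = 0 := by
      rw [show f.kerMap ≫ kernel.ι b = kernel.ι a ≫ f.f₁ from by simp [kernel.map],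
        ← Category.assoc, hfac]
      exact hwf
    rw [← Category.assoc] at h2
    have h3 : kernel.lift a w hwa ≫ f.kerMap = 0 :=
      zero_of_comp_mono (kernel.ι b) h2
    have h4 : kernel.lift a w hwa = 0 := by
      rw [← cancel_mono f.kerMap, h3, zero_comp]
    rw [← hfac, h4, zero_comp]
  -- `v` is epi.
  have hepi : Epi v := by
    apply Preadditive.epi_of_cancel_zero
    intro P z hz
    have hbz : b ≫ z = 0 := by
      have := biprod.inr ≫= hz; simp [hv] at this
      simpa using this
    have hfz : f.f₀ ≫ z = 0 := by
      have := biprod.inl ≫= hz; simpa [hv] using this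
    have hfac : cokernel.π b ≫ cokernel.desc b z hbz = z := cokernel.π_desc b z hbz
    have h2 : (cokernel.π a ≫ f.cokerMap) ≫ cokernel.desc b z hbz = 0 := by
      rw [cokernel.π_desc, Category.assoc, cokernel.π_desc]
      exact hfz
    rw [Category.assoc] at h2
    have h3 : f.cokerMap ≫ cokernel.desc b z hbz = 0 :=
      zero_of_epi_comp (cokernel.π a) h2
    have h4 : cokernel.desc b z hbz = 0 := by
      rw [← cancel_epi f.cokerMap, h3, comp_zero]
    rw [← hfac, h4, comp_zero]
  -- The short complex is exact.
  have hSexact : S.Exact := by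
    rw [ShortComplex.exact_iff_exact_up_to_refinements]
    intro T x hx
    set x₀ : T ⟶ A₀ := x ≫ biprod.fst with hx₀
    set x₁ : T ⟶ B₁ := x ≫ biprod.snd with hx₁
    have hxv : x₀ ≫ f.f₀ - x₁ ≫ b = 0 := by
      have : x ≫ v = 0 := hx
      simpa [hv, hx₀, hx₁, biprod.desc_eq, Preadditive.comp_add, Preadditive.comp_sub,
        sub_eq_add_neg] using this
    -- `x₀` dies in `coker a`.
    have hx₀c : x₀ ≫ cokernel.π a = 0 := by
      have h1 : x₀ ≫ f.f₀ ≫ cokernel.π b = 0 := by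
        rw [← Category.assoc]
        have hxv' := hxv
        rw [sub_eq_zero] at hxv'
        rw [hxv', Category.assoc, cokernel.condition, comp_zero]
      rw [show f.f₀ ≫ cokernel.π b = cokernel.π a ≫ f.cokerMap from by
        simp [cokernel.map], ← Category.assoc] at h1
      exact zero_of_comp_mono f.cokerMap h1
    -- refine: lift `x₀` through `a`.
    have hexa : (ShortComplex.mk a (cokernel.π a) (cokernel.condition a)).Exact :=
      ShortComplex.exact_of_g_is_cokernel _ (cokernelIsCokernel a)
    obtain ⟨T', π, hπ, y₀, hy₀⟩ := hexa.exact_up_to_refinements x₀ hx₀c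
    dsimp at hy₀
    -- the discrepancy lands in `ker b`.
    set z : T' ⟶ B₁ := π ≫ x₁ - y₀ ≫ f.f₁ with hz
    have hzb : z ≫ b = 0 := by
      have hxv' := hxv
      rw [sub_eq_zero] at hxv'
      have h3 : (y₀ ≫ f.f₁) ≫ b = (π ≫ x₁) ≫ b := by
        rw [Category.assoc, show f.f₁ ≫ b = a ≫ f.f₀ from f.comm.symm, ← Category.assoc,
          ← hy₀, Category.assoc, hxv']
        simp [hx₁]
      rw [hz, Preadditive.sub_comp, h3, sub_self]
    set w : T' ⟶ kernel a := kernel.lift b z hzb ≫ inv f.kerMap with hw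
    refine ⟨T', π, hπ, y₀ + w ≫ kernel.ι a, ?_⟩
    apply biprod.hom_ext
    · simp only [Category.assoc]
      have : u ≫ biprod.fst = a := by simp [hu]
      rw [this, Preadditive.add_comp, Category.assoc, kernel.condition, comp_zero, add_zero]
      simpa [hx₀] using hy₀
    · simp only [Category.assoc]
      have : u ≫ biprod.snd = f.f₁ := by simp [hu]
      rw [this, Preadditive.add_comp]
      have hwι : w ≫ kernel.ι a ≫ f.f₁ = z := by
        have : kernel.ι a ≫ f.f₁ = f.kerMap ≫ kernel.ι b := by simp
        rw [this, hw, Category.assoc, IsIso.inv_hom_id_assoc, kernel.lift_ι]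
      rw [Category.assoc, hwι, hz]
      simp [hx₁]
  -- Split the mono using injectivity of `A₁`.
  have := hmono
  set r : A₀ ⊞ B₁ ⟶ A₁ := Injective.factorThru (𝟙 A₁) u with hr
  have hur : u ≫ r = 𝟙 A₁ := Injective.comp_factorThru _ _
  set e : A₀ ⊞ B₁ ⟶ A₀ ⊞ B₁ := 𝟙 _ - r ≫ u with he
  have hue : u ≫ e = 0 := by
    rw [he, Preadditive.comp_sub, Category.comp_id, ← Category.assoc, hur,
      Category.id_comp, sub_self]
  have hepiS : Epi S.g := hepi
  obtain ⟨t, ht⟩ := CokernelCofork.IsColimit.desc' hSexact.gIsCokernel e hue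
  change v ≫ t = e at ht
  -- components
  set ρ₀ : A₀ ⟶ A₁ := biprod.inl ≫ r with hρ₀
  set ρ₁ : B₁ ⟶ A₁ := biprod.inr ≫ r with hρ₁
  set τ₀ : B₀ ⟶ A₀ := t ≫ biprod.fst with hτ₀
  set τ₁ : B₀ ⟶ B₁ := t ≫ biprod.snd with hτ₁
  -- key identities
  have key1 : a ≫ ρ₀ + f.f₁ ≫ ρ₁ = 𝟙 A₁ := by
    rw [hρ₀, hρ₁, ← Category.assoc, ← Category.assoc, ← Preadditive.add_comp, ← biprod.lift_eq]
    exact hur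
  have htv : t ≫ v = 𝟙 B₀ := by
    have : v ≫ t ≫ v = v ≫ 𝟙 B₀ := by
      rw [← Category.assoc, ht, he, Preadditive.sub_comp, Category.id_comp, Category.assoc,
        huv, comp_zero, sub_zero, Category.comp_id]
    exact (cancel_epi v).mp this
  have key2 : τ₀ ≫ f.f₀ - τ₁ ≫ b = 𝟙 B₀ := by
    rw [hτ₀, hτ₁, Category.assoc, Category.assoc, ← Preadditive.comp_sub]
    have : biprod.fst ≫ f.f₀ - biprod.snd ≫ b = v := by
      rw [hv, biprod.desc_eq, Preadditive.comp_neg, ← sub_eq_add_neg]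
    rw [this, htv]
  have E00 : f.f₀ ≫ τ₀ = 𝟙 A₀ - ρ₀ ≫ a := by
    have h1 := biprod.inl ≫= ht
    rw [he] at h1
    have h2 := h1 =≫ biprod.fst
    simpa [hv, hρ₀, hτ₀, hu, Preadditive.sub_comp, Preadditive.comp_sub] using h2
  have E10 : b ≫ τ₀ = ρ₁ ≫ a := by
    have h1 := biprod.inr ≫= ht
    rw [he] at h1
    have h2 := h1 =≫ biprod.fst
    simp [hv, hρ₁, hτ₀, hu, Preadditive.sub_comp, Preadditive.comp_sub] at h2
    rw [hρ₁, hτ₀]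
    simpa [Category.assoc] using h2
  have E11 : 𝟙 B₁ - ρ₁ ≫ f.f₁ = -(b ≫ τ₁) := by
    have h1 := biprod.inr ≫= ht
    rw [he] at h1
    have h2 := h1 =≫ biprod.snd
    simpa [hv, hρ₁, hτ₁, hu, Preadditive.sub_comp, Preadditive.comp_sub] using h2.symm
  refine ⟨⟨τ₀, ρ₁, E10⟩, ⟨-ρ₀, ?_, ?_⟩, ⟨τ₁, ?_, ?_⟩⟩
  · show f.f₁ ≫ ρ₁ - 𝟙 A₁ = a ≫ (-ρ₀)
    rw [Preadditive.comp_neg, ← key1]; abel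
  · show f.f₀ ≫ τ₀ - 𝟙 A₀ = (-ρ₀) ≫ a
    rw [E00, Preadditive.neg_comp]; abel
  · show ρ₁ ≫ f.f₁ - 𝟙 B₁ = b ≫ τ₁
    have h := congrArg Neg.neg E11
    rw [neg_sub, neg_neg] at h
    exact h
  · show τ₀ ≫ f.f₀ - 𝟙 B₀ = τ₁ ≫ b
    rw [← key2]; abel
end
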